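/- arXiv:1207.2622 — 3 statements merged into one kernel-verified Lean document; each statement's English description precedes it below -/
import Mathlib

section
/- A set of p = I+J-1 cells of an I×J table forms a strictly minimal pattern for the independence model (i.e., the corresponding columns of the design matrix of the two-way independence loglinear model are linearly independent) if and only if the set does not contain any k-cycle for k = 2, ..., min(I,J). -/
def designCol (I J : ℕ) (c : Fin I × Fin J) : Unit ⊕ Fin (I - 1) ⊕ Fin (J - 1) → ℝ :=
  fun r => match r with
  | Sum.inl _ => 1
  | Sum.inr (Sum.inl a) => if (c.1 : ℕ) = (a : ℕ) then 1 else 0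
  | Sum.inr (Sum.inr b) => if (c.2 : ℕ) = (b : ℕ) then 1 else 0

def IsKCycle {I J : ℕ} (k : ℕ) (C : Finset (Fin I × Fin J)) : Prop :=
  2 ≤ k ∧ C.card = 2 * k ∧
    (C.image Prod.fst).card = k ∧ (C.image Prod.snd).card = k ∧
    (∀ i ∈ C.image Prod.fst, (C.filter fun c => c.1 = i).card = 2) ∧
    (∀ j ∈ C.image Prod.snd, (C.filter fun c => c.2 = j).card = 2)

open Finset

/-! ### Combinatorial part: a set whose cell count is at least (rows + columns) contains a cycle -/

lemma exists_cycle_aux (I J : ℕ) : ∀ (n : ℕ) (T : Finset (Fin I × Fin J)), T.card ≤ n →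
    T.Nonempty →
    (T.image Prod.fst).card + (T.image Prod.snd).card ≤ T.card →
    ∃ k C, C ⊆ T ∧ IsKCycle k C := by
  intro n
  induction n with
  | zero =>
    intro T hc hne _
    exact absurd (Finset.card_pos.mpr hne) (by omega)
  | succ n ih =>
    intro T hc hne hb
    have hr1 : 1 ≤ (T.image Prod.fst).card := card_pos.mpr (hne.image _)
    have hs1 : 1 ≤ (T.image Prod.snd).card := card_pos.mpr (hne.image _)
    have hTr : T.card = ∑ i ∈ T.image Prod.fst, (T.filter fun c => c.1 = i).card :=
      card_eq_sum_card_fiberwise (fun c hc => mem_image_of_mem _ hc)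
    have hTs : T.card = ∑ j ∈ T.image Prod.snd, (T.filter fun c => c.2 = j).card :=
      card_eq_sum_card_fiberwise (fun c hc => mem_image_of_mem _ hc)
    have hfib1r : ∀ i ∈ T.image Prod.fst, 1 ≤ (T.filter fun c => c.1 = i).card := by
      intro i hi
      obtain ⟨c, hcT, rfl⟩ := mem_image.mp hi
      exact card_pos.mpr ⟨c, mem_filter.mpr ⟨hcT, rfl⟩⟩
    have hfib1s : ∀ j ∈ T.image Prod.snd, 1 ≤ (T.filter fun c => c.2 = j).card := by
      intro j hj
      obtain ⟨c, hcT, rfl⟩ := mem_image.mp hj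
      exact card_pos.mpr ⟨c, mem_filter.mpr ⟨hcT, rfl⟩⟩
    have hT2 : 2 ≤ T.card := le_trans (by omega) hb
    by_cases h1 : (∃ i ∈ T.image Prod.fst, (T.filter fun c => c.1 = i).card = 1) ∨
        (∃ j ∈ T.image Prod.snd, (T.filter fun c => c.2 = j).card = 1)
    · -- a line with exactly one cell: delete that cell
      obtain (⟨i, hi, hone⟩ | ⟨j, hj, hone⟩) := h1
      · obtain ⟨c, hcf⟩ := card_eq_one.mp hone
        have hcmem : c ∈ T.filter fun c => c.1 = i := hcf ▸ mem_singleton_self c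
        have hcT : c ∈ T := (mem_filter.mp hcmem).1
        have hci : c.1 = i := (mem_filter.mp hcmem).2
        set T' := T.erase c with hT'
        have hcard' : T'.card = T.card - 1 := card_erase_of_mem hcT
        have himg : T'.image Prod.fst ⊆ (T.image Prod.fst).erase i := by
          intro x hx
          obtain ⟨d, hd, rfl⟩ := mem_image.mp hx
          have hdT : d ∈ T := mem_of_mem_erase hd
          refine mem_erase.mpr ⟨?_, mem_image_of_mem _ hdT⟩
          intro hdi
          have : d ∈ T.filter fun c => c.1 = i := mem_filter.mpr ⟨hdT, hdi⟩
          rw [hcf, mem_singleton] at this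
          exact (ne_of_mem_erase hd) this
        have hr' : (T'.image Prod.fst).card ≤ (T.image Prod.fst).card - 1 := by
          have := card_le_card himg
          rwa [card_erase_of_mem hi] at this
        have hs' : (T'.image Prod.snd).card ≤ (T.image Prod.snd).card :=
          card_le_card (image_subset_image (erase_subset _ _))
        obtain ⟨k, C, hCsub, hcyc⟩ := ih T' (by omega) (card_pos.mp (by omega)) (by omega)
        exact ⟨k, C, hCsub.trans (erase_subset _ _), hcyc⟩
      · obtain ⟨c, hcf⟩ := card_eq_one.mp hone
        have hcmem : c ∈ T.filter fun c => c.2 = j := hcf ▸ mem_singleton_self c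
        have hcT : c ∈ T := (mem_filter.mp hcmem).1
        have hcj : c.2 = j := (mem_filter.mp hcmem).2
        set T' := T.erase c with hT'
        have hcard' : T'.card = T.card - 1 := card_erase_of_mem hcT
        have himg : T'.image Prod.snd ⊆ (T.image Prod.snd).erase j := by
          intro x hx
          obtain ⟨d, hd, rfl⟩ := mem_image.mp hx
          have hdT : d ∈ T := mem_of_mem_erase hd
          refine mem_erase.mpr ⟨?_, mem_image_of_mem _ hdT⟩
          intro hdj
          have : d ∈ T.filter fun c => c.2 = j := mem_filter.mpr ⟨hdT, hdj⟩
          rw [hcf, mem_singleton] at this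
          exact (ne_of_mem_erase hd) this
        have hs' : (T'.image Prod.snd).card ≤ (T.image Prod.snd).card - 1 := by
          have := card_le_card himg
          rwa [card_erase_of_mem hj] at this
        have hr' : (T'.image Prod.fst).card ≤ (T.image Prod.fst).card :=
          card_le_card (image_subset_image (erase_subset _ _))
        obtain ⟨k, C, hCsub, hcyc⟩ := ih T' (by omega) (card_pos.mp (by omega)) (by omega)
        exact ⟨k, C, hCsub.trans (erase_subset _ _), hcyc⟩
    · push_neg at h1
      obtain ⟨h1r, h1s⟩ := h1
      have hfib2r : ∀ i ∈ T.image Prod.fst, 2 ≤ (T.filter fun c => c.1 = i).card := by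
        intro i hi
        have := hfib1r i hi
        have := h1r i hi
        omega
      have hfib2s : ∀ j ∈ T.image Prod.snd, 2 ≤ (T.filter fun c => c.2 = j).card := by
        intro j hj
        have := hfib1s j hj
        have := h1s j hj
        omega
      have h2r : 2 * (T.image Prod.fst).card ≤ T.card := by
        rw [hTr, two_mul]
        calc (T.image Prod.fst).card + (T.image Prod.fst).card
            = ∑ _i ∈ T.image Prod.fst, 2 := by rw [sum_const, smul_eq_mul]; ring
          _ ≤ _ := sum_le_sum hfib2r
      have h2s : 2 * (T.image Prod.snd).card ≤ T.card := by
        rw [hTs, two_mul]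
        calc (T.image Prod.snd).card + (T.image Prod.snd).card
            = ∑ _j ∈ T.image Prod.snd, 2 := by rw [sum_const, smul_eq_mul]; ring
          _ ≤ _ := sum_le_sum hfib2s
      by_cases h3 : (∃ i ∈ T.image Prod.fst, 3 ≤ (T.filter fun c => c.1 = i).card) ∨
          (∃ j ∈ T.image Prod.snd, 3 ≤ (T.filter fun c => c.2 = j).card)
      · -- a line with at least three cells: delete one of its cells
        have hbig : (T.image Prod.fst).card + (T.image Prod.snd).card + 1 ≤ T.card := by
          obtain (⟨i, hi, h3i⟩ | ⟨j, hj, h3j⟩) := h3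
          · have hlt : 2 * (T.image Prod.fst).card < T.card := by
              rw [hTr]
              calc 2 * (T.image Prod.fst).card = ∑ _i ∈ T.image Prod.fst, 2 := by
                    rw [sum_const, smul_eq_mul]; ring
                _ < _ := sum_lt_sum hfib2r ⟨i, hi, by omega⟩
            omega
          · have hlt : 2 * (T.image Prod.snd).card < T.card := by
              rw [hTs]
              calc 2 * (T.image Prod.snd).card = ∑ _j ∈ T.image Prod.snd, 2 := by
                    rw [sum_const, smul_eq_mul]; ring
                _ < _ := sum_lt_sum hfib2s ⟨j, hj, by omega⟩
            omega
        obtain ⟨c, hcT⟩ := hne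
        set T' := T.erase c with hT'
        have hcard' : T'.card = T.card - 1 := card_erase_of_mem hcT
        have hr' : (T'.image Prod.fst).card ≤ (T.image Prod.fst).card :=
          card_le_card (image_subset_image (erase_subset _ _))
        have hs' : (T'.image Prod.snd).card ≤ (T.image Prod.snd).card :=
          card_le_card (image_subset_image (erase_subset _ _))
        obtain ⟨k, C, hCsub, hcyc⟩ := ih T' (by omega) (card_pos.mp (by omega)) (by omega)
        exact ⟨k, C, hCsub.trans (erase_subset _ _), hcyc⟩
      · -- all lines have exactly two cells: T itself is a cycle
        push_neg at h3
        obtain ⟨h3r, h3s⟩ := h3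
        have hfr : ∀ i ∈ T.image Prod.fst, (T.filter fun c => c.1 = i).card = 2 := by
          intro i hi
          have := hfib2r i hi
          have := h3r i hi
          omega
        have hfs : ∀ j ∈ T.image Prod.snd, (T.filter fun c => c.2 = j).card = 2 := by
          intro j hj
          have := hfib2s j hj
          have := h3s j hj
          omega
        have hcr : T.card = 2 * (T.image Prod.fst).card := by
          rw [hTr]
          rw [Finset.sum_congr rfl hfr, sum_const, smul_eq_mul]
          ring
        have hcs : T.card = 2 * (T.image Prod.snd).card := by
          rw [hTs]
          rw [Finset.sum_congr rfl hfs, sum_const, smul_eq_mul]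
          ring
        have hk2 : 2 ≤ (T.image Prod.fst).card := by
          rcases Nat.lt_or_ge (T.image Prod.fst).card 2 with h | h
          · exfalso
            have hreq : (T.image Prod.fst).card = 1 := by omega
            obtain ⟨i0, hi0⟩ := card_eq_one.mp hreq
            obtain ⟨c0, hc0T⟩ := hne
            have hj0 : c0.2 ∈ T.image Prod.snd := mem_image_of_mem _ hc0T
            obtain ⟨a, b, hab, habf⟩ := card_eq_two.mp (hfs c0.2 hj0)
            have haf : a ∈ T.filter fun c => c.2 = c0.2 := habf ▸ mem_insert_self a {b}
            have hbf : b ∈ T.filter fun c => c.2 = c0.2 := habf ▸ by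
              exact mem_insert_of_mem (mem_singleton_self b)
            have haT := (mem_filter.mp haf).1
            have hbT := (mem_filter.mp hbf).1
            have ha1 : a.1 = i0 := by
              have := mem_image_of_mem Prod.fst haT
              rw [hi0, mem_singleton] at this; exact this
            have hb1 : b.1 = i0 := by
              have := mem_image_of_mem Prod.fst hbT
              rw [hi0, mem_singleton] at this; exact this
            exact hab (Prod.ext (ha1.trans hb1.symm)
              ((mem_filter.mp haf).2.trans (mem_filter.mp hbf).2.symm))
          · exact h
        exact ⟨(T.image Prod.fst).card, T, Finset.Subset.refl T, hk2, hcr, rfl, by omega, hfr, hfs⟩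

/-! ### Linear algebra part -/

noncomputable def eConst (I J : ℕ) : Unit ⊕ Fin (I - 1) ⊕ Fin (J - 1) → ℝ :=
  fun r => match r with
  | Sum.inl _ => 1
  | _ => 0

noncomputable def eRow (I J : ℕ) (i : Fin I) : Unit ⊕ Fin (I - 1) ⊕ Fin (J - 1) → ℝ :=
  fun r => match r with
  | Sum.inr (Sum.inl a) => if (i : ℕ) = (a : ℕ) then 1 else 0
  | _ => 0

noncomputable def eCol (I J : ℕ) (j : Fin J) : Unit ⊕ Fin (I - 1) ⊕ Fin (J - 1) → ℝ :=
  fun r => match r with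
  | Sum.inr (Sum.inr b) => if (j : ℕ) = (b : ℕ) then 1 else 0
  | _ => 0

lemma designCol_eq (I J : ℕ) (c : Fin I × Fin J) :
    designCol I J c = eConst I J + eRow I J c.1 + eCol I J c.2 := by
  funext r
  rcases r with _ | (a | b) <;>
    simp [designCol, eConst, eRow, eCol]

lemma not_linearIndependent_of_cycle (I J : ℕ) (S : Finset (Fin I × Fin J))
    (h : LinearIndependent ℝ (fun c : S => designCol I J c.val))
    {k : ℕ} {C : Finset (Fin I × Fin J)} (hCS : C ⊆ S) (hC : IsKCycle k C) : False := by
  classical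
  obtain ⟨hk2, hcard, hrk, hsk, _, _⟩ := hC
  have hLI : LinearIndependent ℝ (fun c : C => designCol I J c.val) := by
    have := h.comp (fun c : C => (⟨c.val, hCS c.2⟩ : S)) (by
      intro a b hab
      exact Subtype.ext (congrArg (Subtype.val : S → Fin I × Fin J) hab))
    exact this
  set R' := C.image Prod.fst with hR'
  set Co' := C.image Prod.snd with hCo'
  have hR'ne : R'.Nonempty := card_pos.mp (by omega)
  obtain ⟨i0, hi0⟩ := hR'ne
  -- the spanning family of 2k - 1 vectors
  set u : ({i : R' // i ≠ ⟨i0, hi0⟩} ⊕ Co') → (Unit ⊕ Fin (I - 1) ⊕ Fin (J - 1) → ℝ) :=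
    fun x => match x with
    | Sum.inl i => eRow I J i.val.val - eRow I J i0
    | Sum.inr j => eConst I J + eRow I J i0 + eCol I J j.val
    with hu
  set W := Submodule.span ℝ (Set.range u) with hW
  have hmem : ∀ c : C, designCol I J c.val ∈ W := by
    intro c
    have hc1 : c.val.1 ∈ R' := mem_image_of_mem _ c.2
    have hc2 : c.val.2 ∈ Co' := mem_image_of_mem _ c.2
    by_cases hio : c.val.1 = i0
    · have : designCol I J c.val = u (Sum.inr ⟨c.val.2, hc2⟩) := by
        rw [designCol_eq, hio]
      rw [this]
      exact Submodule.subset_span ⟨Sum.inr ⟨c.val.2, hc2⟩, rfl⟩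
    · have hne : (⟨c.val.1, hc1⟩ : R') ≠ ⟨i0, hi0⟩ := by
        intro hh
        exact hio (congrArg Subtype.val hh)
      have : designCol I J c.val =
          u (Sum.inl ⟨⟨c.val.1, hc1⟩, hne⟩) + u (Sum.inr ⟨c.val.2, hc2⟩) := by
        rw [designCol_eq]
        show _ = (eRow I J c.val.1 - eRow I J i0) + (eConst I J + eRow I J i0 + eCol I J c.val.2)
        abel
      rw [this]
      exact Submodule.add_mem _ (Submodule.subset_span ⟨Sum.inl ⟨⟨c.val.1, hc1⟩, hne⟩, rfl⟩)
        (Submodule.subset_span ⟨Sum.inr ⟨c.val.2, hc2⟩, rfl⟩)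
  -- restrict to W and count
  have hLIW : LinearIndependent ℝ (fun c : C => (⟨designCol I J c.val, hmem c⟩ : W)) := by
    apply LinearIndependent.of_comp W.subtype
    exact hLI
  have hcardle : Fintype.card C ≤ Module.finrank ℝ W :=
    hLIW.fintype_card_le_finrank
  have hWle : Module.finrank ℝ W ≤ Fintype.card ({i : R' // i ≠ ⟨i0, hi0⟩} ⊕ Co') := by
    have := finrank_range_le_card (R := ℝ) u
    rwa [Set.finrank] at this
  have hcC : Fintype.card C = 2 * k := by rw [Fintype.card_coe, hcard]
  have hne1 : Fintype.card {i : R' // i ≠ ⟨i0, hi0⟩} = k - 1 := by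
    have h1 := Fintype.card_subtype_compl (fun i : R' => i = ⟨i0, hi0⟩)
    rw [Fintype.card_subtype_eq, Fintype.card_coe, hrk] at h1
    exact h1
  have hidx : Fintype.card ({i : R' // i ≠ ⟨i0, hi0⟩} ⊕ Co') = (k - 1) + k := by
    rw [Fintype.card_sum, hne1, Fintype.card_coe, hsk]
  omega

/-! ### Main theorem -/

theorem stmt0 (I J : ℕ) (hI : 1 ≤ I) (hJ : 1 ≤ J)
    (S : Finset (Fin I × Fin J)) (hcard : S.card = I + J - 1) :
    LinearIndependent ℝ (fun c : S => designCol I J c.val) ↔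
      ∀ k, 2 ≤ k → k ≤ min I J → ∀ C ⊆ S, ¬ IsKCycle k C := by
  classical
  constructor
  · intro h k _ _ C hCS hC
    exact not_linearIndependent_of_cycle I J S h hCS hC
  · intro hnc
    rw [Fintype.linearIndependent_iff]
    intro g hg
    intro c0
    by_contra hc0
    set lam : Fin I × Fin J → ℝ := fun c => if h : c ∈ S then g ⟨c, h⟩ else 0 with hlam
    have hsum : ∑ c ∈ S, lam c • designCol I J c = 0 := by
      rw [← Finset.sum_coe_sort S (fun c => lam c • designCol I J c)]
      rw [← hg]
      apply Finset.sum_congr rfl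
      intro c _
      congr 1
      simp [hlam]
    have hcoord : ∀ r, ∑ c ∈ S, lam c * designCol I J c r = 0 := by
      intro r
      have h2 := congrFun hsum r
      simpa [Finset.sum_apply] using h2
    have htot : ∑ c ∈ S, lam c = 0 := by
      have h2 := hcoord (Sum.inl ())
      simpa [designCol] using h2
    have hrow0 : ∀ i : Fin I, (i : ℕ) < I - 1 →
        ∑ c ∈ S.filter (fun c => c.1 = i), lam c = 0 := by
      intro i hi
      have h2 := hcoord (Sum.inr (Sum.inl ⟨i.val, hi⟩))
      have h3 : ∑ c ∈ S, lam c * designCol I J c (Sum.inr (Sum.inl ⟨i.val, hi⟩)) =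
          ∑ c ∈ S, if c.1 = i then lam c else 0 :=
        Finset.sum_congr rfl (fun c _ => by simp [designCol, mul_ite, Fin.val_eq_val])
      rw [Finset.sum_filter, ← h3, h2]
    have hrow : ∀ i : Fin I, ∑ c ∈ S.filter (fun c => c.1 = i), lam c = 0 := by
      intro i
      rcases Nat.lt_or_ge (i : ℕ) (I - 1) with h | h
      · exact hrow0 i h
      · have hfib := Finset.sum_fiberwise S (fun c => c.1) lam
        rw [htot] at hfib
        have hsingle := Finset.sum_eq_single_of_mem i (Finset.mem_univ i)
          (fun i' _ hne => hrow0 i' (by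
            have hvne : (i' : ℕ) ≠ (i : ℕ) := fun hh => hne (Fin.ext hh)
            have := i'.isLt
            omega))
        rw [← hsingle, hfib]
    have hcol0 : ∀ j : Fin J, (j : ℕ) < J - 1 →
        ∑ c ∈ S.filter (fun c => c.2 = j), lam c = 0 := by
      intro j hj
      have h2 := hcoord (Sum.inr (Sum.inr ⟨j.val, hj⟩))
      have h3 : ∑ c ∈ S, lam c * designCol I J c (Sum.inr (Sum.inr ⟨j.val, hj⟩)) =
          ∑ c ∈ S, if c.2 = j then lam c else 0 :=
        Finset.sum_congr rfl (fun c _ => by simp [designCol, mul_ite, Fin.val_eq_val])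
      rw [Finset.sum_filter, ← h3, h2]
    have hcol : ∀ j : Fin J, ∑ c ∈ S.filter (fun c => c.2 = j), lam c = 0 := by
      intro j
      rcases Nat.lt_or_ge (j : ℕ) (J - 1) with h | h
      · exact hcol0 j h
      · have hfib := Finset.sum_fiberwise S (fun c => c.2) lam
        rw [htot] at hfib
        have hsingle := Finset.sum_eq_single_of_mem j (Finset.mem_univ j)
          (fun j' _ hne => hcol0 j' (by
            have hvne : (j' : ℕ) ≠ (j : ℕ) := fun hh => hne (Fin.ext hh)
            have := j'.isLt
            omega))
        rw [← hsingle, hfib]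
    -- the support of lam
    set T := S.filter (fun c => lam c ≠ 0) with hT
    have hc0T : c0.val ∈ T := by
      refine mem_filter.mpr ⟨c0.2, ?_⟩
      simpa [hlam] using hc0
    have hsupp : ∀ c ∈ S, c ∉ T → lam c = 0 := by
      intro c hcS hcT
      by_contra hlc
      exact hcT (mem_filter.mpr ⟨hcS, hlc⟩)
    have hTS : T ⊆ S := filter_subset _ _
    have hfib2r : ∀ i ∈ T.image Prod.fst, 2 ≤ (T.filter fun c => c.1 = i).card := by
      intro i hi
      obtain ⟨c, hcT, rfl⟩ := mem_image.mp hi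
      have h1 : 1 ≤ (T.filter fun x => x.1 = c.1).card :=
        card_pos.mpr ⟨c, mem_filter.mpr ⟨hcT, rfl⟩⟩
      have hne1 : (T.filter fun x => x.1 = c.1).card ≠ 1 := by
        intro h1'
        obtain ⟨d, hd⟩ := card_eq_one.mp h1'
        have hdmem : d ∈ T.filter fun x => x.1 = c.1 := hd ▸ mem_singleton_self d
        have hdT : d ∈ T := (mem_filter.mp hdmem).1
        have hrw : ∑ x ∈ S.filter (fun x => x.1 = c.1), lam x =
            ∑ x ∈ T.filter (fun x => x.1 = c.1), lam x := by
          refine (sum_subset (filter_subset_filter _ hTS) ?_).symm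
          intro x hxS hxT
          have hx1 : x.1 = c.1 := (mem_filter.mp hxS).2
          exact hsupp x (mem_filter.mp hxS).1 (fun hxT' => hxT (mem_filter.mpr ⟨hxT', hx1⟩))
        rw [hrow c.1, hd, sum_singleton] at hrw
        exact (mem_filter.mp hdT).2 hrw.symm
      omega
    have hfib2s : ∀ j ∈ T.image Prod.snd, 2 ≤ (T.filter fun c => c.2 = j).card := by
      intro j hj
      obtain ⟨c, hcT, rfl⟩ := mem_image.mp hj
      have h1 : 1 ≤ (T.filter fun x => x.2 = c.2).card :=
        card_pos.mpr ⟨c, mem_filter.mpr ⟨hcT, rfl⟩⟩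
      have hne1 : (T.filter fun x => x.2 = c.2).card ≠ 1 := by
        intro h1'
        obtain ⟨d, hd⟩ := card_eq_one.mp h1'
        have hdmem : d ∈ T.filter fun x => x.2 = c.2 := hd ▸ mem_singleton_self d
        have hdT : d ∈ T := (mem_filter.mp hdmem).1
        have hrw : ∑ x ∈ S.filter (fun x => x.2 = c.2), lam x =
            ∑ x ∈ T.filter (fun x => x.2 = c.2), lam x := by
          refine (sum_subset (filter_subset_filter _ hTS) ?_).symm
          intro x hxS hxT
          have hx2 : x.2 = c.2 := (mem_filter.mp hxS).2
          exact hsupp x (mem_filter.mp hxS).1 (fun hxT' => hxT (mem_filter.mpr ⟨hxT', hx2⟩))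
        rw [hcol c.2, hd, sum_singleton] at hrw
        exact (mem_filter.mp hdT).2 hrw.symm
      omega
    have hTb : (T.image Prod.fst).card + (T.image Prod.snd).card ≤ T.card := by
      have hTr : T.card = ∑ i ∈ T.image Prod.fst, (T.filter fun c => c.1 = i).card :=
        card_eq_sum_card_fiberwise (fun c hc => mem_image_of_mem _ hc)
      have hTs : T.card = ∑ j ∈ T.image Prod.snd, (T.filter fun c => c.2 = j).card :=
        card_eq_sum_card_fiberwise (fun c hc => mem_image_of_mem _ hc)
      have h2r : 2 * (T.image Prod.fst).card ≤ T.card := by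
        rw [hTr, two_mul]
        calc (T.image Prod.fst).card + (T.image Prod.fst).card
            = ∑ _i ∈ T.image Prod.fst, 2 := by rw [sum_const, smul_eq_mul]; ring
          _ ≤ _ := sum_le_sum hfib2r
      have h2s : 2 * (T.image Prod.snd).card ≤ T.card := by
        rw [hTs, two_mul]
        calc (T.image Prod.snd).card + (T.image Prod.snd).card
            = ∑ _j ∈ T.image Prod.snd, 2 := by rw [sum_const, smul_eq_mul]; ring
          _ ≤ _ := sum_le_sum hfib2s
      omega
    obtain ⟨k, C, hCT, hcyc⟩ :=
      exists_cycle_aux I J T.card T le_rfl ⟨c0.val, hc0T⟩ hTb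
    have hkI : k ≤ I := by
      have h1 : (C.image Prod.fst).card ≤ I := by
        calc (C.image Prod.fst).card ≤ (Finset.univ : Finset (Fin I)).card := card_le_univ _
          _ = I := by simp
      rw [hcyc.2.2.1] at h1
      exact h1
    have hkJ : k ≤ J := by
      have h1 : (C.image Prod.snd).card ≤ J := by
        calc (C.image Prod.snd).card ≤ (Finset.univ : Finset (Fin J)).card := card_le_univ _
          _ = J := by simp
      rw [hcyc.2.2.2.1] at h1
      exact h1
    exact hnc k hcyc.1 (le_min hkI hkJ) C (hCT.trans hTS) hcyc
end

section
/- In an I×J table with I ≤ J, any set of I+J-1 cells that meets every row and every column and contains no k-cycle for any k ≥ 2 corresponds, as a bipartite graph on the I rows and J columns, to a spanning tree; in particular, a set of I+J-1 cells is a strictly minimal pattern for the independence model if and only if the associated bipartite graph (rows and columns as vertices, cells as edges) is a spanning tree of the complete bipartite graph K_{I,J}. -/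
def cellGraph {I J : ℕ} (S : Finset (Fin I × Fin J)) : SimpleGraph (Fin I ⊕ Fin J) where
  Adj u v := (∃ i j, u = Sum.inl i ∧ v = Sum.inr j ∧ (i, j) ∈ S) ∨
             (∃ i j, v = Sum.inl i ∧ u = Sum.inr j ∧ (i, j) ∈ S)
  symm := ⟨fun u v h => Or.symm h⟩
  loopless := ⟨by rintro u (⟨i, j, rfl, h, -⟩ | ⟨i, j, rfl, h, -⟩) <;> simp at h⟩

namespace Aux

def inc {I J : ℕ} (c : Fin I × Fin J) : (Fin I ⊕ Fin J) → ℝ :=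
  fun u => (if u = Sum.inl c.1 then 1 else 0) + (if u = Sum.inr c.2 then 1 else 0)

lemma inc_eq_single {I J : ℕ} (c : Fin I × Fin J) :
    inc c = Pi.single (Sum.inl c.1) (1:ℝ) + Pi.single (Sum.inr c.2) 1 := by
  funext u
  simp [inc, Pi.single_apply]

lemma single_mem_of_walk {I J : ℕ} {T : Finset (Fin I × Fin J)} (v₀ : Fin I ⊕ Fin J)
    {u v : Fin I ⊕ Fin J} (p : (cellGraph T).Walk u v)
    (h : Pi.single u (1:ℝ) ∈
      Submodule.span ℝ (inc '' (↑T : Set (Fin I × Fin J))) ⊔ (ℝ ∙ Pi.single v₀ 1)) :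
    Pi.single v (1:ℝ) ∈
      Submodule.span ℝ (inc '' (↑T : Set (Fin I × Fin J))) ⊔ (ℝ ∙ Pi.single v₀ 1) := by
  induction p with
  | nil => exact h
  | @cons a b c hadj p ih =>
      apply ih
      have key : ∀ (i : Fin I) (j : Fin J), (i, j) ∈ T →
          inc (i, j) ∈ Submodule.span ℝ (inc '' (↑T : Set (Fin I × Fin J)))
            ⊔ (ℝ ∙ Pi.single v₀ (1:ℝ)) := by
        intro i j hm
        exact Submodule.mem_sup_left (Submodule.subset_span ⟨(i, j), hm, rfl⟩)
      rcases hadj with ⟨i, j, rfl, rfl, hm⟩ | ⟨i, j, rfl, rfl, hm⟩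
      · have : Pi.single (Sum.inr j) (1:ℝ) =
            inc (i, j) - Pi.single (Sum.inl i) 1 := by
          rw [inc_eq_single]; abel
        rw [this]
        exact Submodule.sub_mem _ (key i j hm) h
      · have : Pi.single (Sum.inl i) (1:ℝ) =
            inc (i, j) - Pi.single (Sum.inr j) 1 := by
          rw [inc_eq_single]; abel
        rw [this]
        exact Submodule.sub_mem _ (key i j hm) h

set_option maxHeartbeats 1000000 in
lemma finrank_bound {I J : ℕ} (hI : 1 ≤ I) {T : Finset (Fin I × Fin J)}
    (hconn : (cellGraph T).Preconnected) :
    I + J ≤ Module.finrank ℝ (Submodule.span ℝ (inc '' (↑T : Set (Fin I × Fin J)))) + 1 := by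
  classical
  set v₀ : Fin I ⊕ Fin J := Sum.inl ⟨0, hI⟩ with hv₀
  set W := Submodule.span ℝ (inc '' (↑T : Set (Fin I × Fin J))) with hW
  have htop : W ⊔ (ℝ ∙ Pi.single v₀ (1:ℝ)) = ⊤ := by
    rw [eq_top_iff]
    intro x _
    have hx : x = ∑ u : Fin I ⊕ Fin J, (x u) • (Pi.single u 1 : (Fin I ⊕ Fin J) → ℝ) := by
      funext w
      rw [Finset.sum_apply]
      simp only [Pi.smul_apply, smul_eq_mul]
      calc x w = ∑ u : Fin I ⊕ Fin J, Pi.single u (x u) w := (Fintype.sum_pi_single w _).symm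
        _ = ∑ u : Fin I ⊕ Fin J, x u * (Pi.single u 1 : (Fin I ⊕ Fin J) → ℝ) w := by
            refine Finset.sum_congr rfl fun u _ => ?_
            simp only [Pi.single_apply]
            split <;> ring
    rw [hx]
    refine Submodule.sum_mem _ fun u _ => Submodule.smul_mem _ _ ?_
    refine single_mem_of_walk v₀ ((hconn v₀ u).some) ?_
    exact Submodule.mem_sup_right (Submodule.mem_span_singleton_self _)
  have h2 : Module.finrank ℝ (ℝ ∙ (Pi.single v₀ 1 : (Fin I ⊕ Fin J) → ℝ)) = 1 := by
    refine finrank_span_singleton ?_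
    intro h
    have := congrFun h v₀
    simp [Pi.single_eq_same] at this
  have h3 : Module.finrank ℝ ((Fin I ⊕ Fin J) → ℝ) = I + J := by
    rw [Module.finrank_fintype_fun_eq_card]
    simp
  calc I + J = Module.finrank ℝ ((Fin I ⊕ Fin J) → ℝ) := h3.symm
    _ = Module.finrank ℝ (⊤ : Submodule ℝ ((Fin I ⊕ Fin J) → ℝ)) := (finrank_top ℝ _).symm
    _ = Module.finrank ℝ (W ⊔ (ℝ ∙ Pi.single v₀ (1:ℝ)) : Submodule ℝ _) := by rw [htop]
    _ ≤ Module.finrank ℝ W + Module.finrank ℝ (ℝ ∙ (Pi.single v₀ 1 : (Fin I ⊕ Fin J) → ℝ)) :=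
        Submodule.finrank_add_le_finrank_add_finrank _ _
    _ ≤ Module.finrank ℝ W + 1 := by omega

lemma finrank_le_card {I J : ℕ} (T : Finset (Fin I × Fin J)) :
    Module.finrank ℝ (Submodule.span ℝ (inc '' (↑T : Set (Fin I × Fin J)))) ≤ T.card := by
  have himg : inc '' (↑T : Set (Fin I × Fin J)) = ↑(T.image inc) := by
    simp [Finset.coe_image]
  rw [himg]
  exact le_trans (finrank_span_finset_le_card (T.image inc)) (Finset.card_image_le)

lemma card_bound {I J : ℕ} (hI : 1 ≤ I) {T : Finset (Fin I × Fin J)}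
    (hconn : (cellGraph T).Preconnected) :
    I + J ≤ T.card + 1 :=
  le_trans (finrank_bound hI hconn) (by have := finrank_le_card T; omega)

lemma range_inc_eq {I J : ℕ} (S : Finset (Fin I × Fin J)) :
    Set.range (fun c : S => inc c.val) = inc '' (↑S : Set (Fin I × Fin J)) := by
  ext x
  constructor
  · rintro ⟨c, rfl⟩
    exact ⟨c.val, c.property, rfl⟩
  · rintro ⟨c, hc, rfl⟩
    exact ⟨⟨c, hc⟩, rfl⟩

lemma indep_of_conn {I J : ℕ} (hI : 1 ≤ I) {S : Finset (Fin I × Fin J)}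
    (hcard : S.card = I + J - 1) (hconn : (cellGraph S).Preconnected) :
    LinearIndependent ℝ (fun c : S => inc c.val) := by
  rw [linearIndependent_iff_card_eq_finrank_span]
  rw [range_inc_eq]
  have hle := finrank_le_card S
  have hge := finrank_bound hI hconn
  rw [Fintype.card_coe, hcard]
  show _ = Module.finrank ℝ (Submodule.span ℝ _)
  omega

noncomputable def fnl {I J : ℕ} (a : Fin I ⊕ Fin J → ℝ) :
    ((Fin I ⊕ Fin J) → ℝ) →ₗ[ℝ] ℝ :=
  ∑ v : Fin I ⊕ Fin J, a v • (LinearMap.proj v : ((Fin I ⊕ Fin J) → ℝ) →ₗ[ℝ] ℝ)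

lemma fnl_apply {I J : ℕ} (a : Fin I ⊕ Fin J → ℝ) (x : (Fin I ⊕ Fin J) → ℝ) :
    fnl a x = ∑ v : Fin I ⊕ Fin J, a v * x v := by
  simp [fnl, LinearMap.sum_apply]

lemma fnl_single {I J : ℕ} (a : Fin I ⊕ Fin J → ℝ) (w : Fin I ⊕ Fin J) :
    fnl a (Pi.single w 1) = a w := by
  rw [fnl_apply]
  rw [Finset.sum_eq_single w]
  · simp
  · intro v _ hv
    simp [Pi.single_apply, hv]
  · simp

lemma fnl_inc {I J : ℕ} (a : Fin I ⊕ Fin J → ℝ) (c : Fin I × Fin J) :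
    fnl a (inc c) = a (Sum.inl c.1) + a (Sum.inr c.2) := by
  rw [inc_eq_single, map_add, fnl_single, fnl_single]

lemma conn_of_indep {I J : ℕ} (hI : 1 ≤ I) {S : Finset (Fin I × Fin J)}
    (hcard : S.card = I + J - 1)
    (hind : LinearIndependent ℝ (fun c : S => inc c.val)) :
    (cellGraph S).Connected := by
  classical
  rw [SimpleGraph.connected_iff]
  refine ⟨?_, ⟨Sum.inl ⟨0, hI⟩⟩⟩
  by_contra hnc
  rw [SimpleGraph.Preconnected] at hnc
  push_neg at hnc
  obtain ⟨u₀, w₀, hur⟩ := hnc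
  set G := cellGraph S with hG
  set sgn : Fin I ⊕ Fin J → ℝ := Sum.elim (fun _ => 1) (fun _ => -1) with hsgn
  set a : Fin I ⊕ Fin J → ℝ := fun v => if G.Reachable u₀ v then sgn v else 0 with ha
  set b : Fin I ⊕ Fin J → ℝ := fun v => if G.Reachable u₀ v then 0 else sgn v with hb
  set W := Submodule.span ℝ (inc '' (↑S : Set (Fin I × Fin J))) with hW
  have sgn_ne : ∀ v, sgn v ≠ 0 := by
    rintro (i | j) <;> simp [hsgn]
  -- both functionals kill W
  have hker : ∀ (f : Fin I ⊕ Fin J → ℝ),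
      (∀ c ∈ S, f (Sum.inl c.1) + f (Sum.inr c.2) = 0) → W ≤ LinearMap.ker (fnl f) := by
    intro f hf
    rw [hW, Submodule.span_le]
    rintro x ⟨c, hc, rfl⟩
    rw [SetLike.mem_coe, LinearMap.mem_ker, fnl_inc]
    exact hf c hc
  have hadj_reach : ∀ c ∈ S, (G.Reachable u₀ (Sum.inl c.1) ↔ G.Reachable u₀ (Sum.inr c.2)) := by
    intro c hc
    have hadj : G.Adj (Sum.inl c.1) (Sum.inr c.2) := Or.inl ⟨c.1, c.2, rfl, rfl, by simpa using hc⟩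
    exact ⟨fun h => h.trans hadj.reachable, fun h => h.trans hadj.symm.reachable⟩
  have hWa : W ≤ LinearMap.ker (fnl a) := by
    refine hker a fun c hc => ?_
    rcases (hadj_reach c hc) with ⟨h1, h2⟩
    by_cases hr : G.Reachable u₀ (Sum.inl c.1)
    · rw [ha]
      simp only [if_pos hr, if_pos (h1 hr), hsgn]
      simp
    · rw [ha]
      simp only [if_neg hr, if_neg (fun h => hr (h2 h))]
      simp
  have hWb : W ≤ LinearMap.ker (fnl b) := by
    refine hker b fun c hc => ?_
    rcases (hadj_reach c hc) with ⟨h1, h2⟩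
    by_cases hr : G.Reachable u₀ (Sum.inl c.1)
    · rw [hb]
      simp only [if_pos hr, if_pos (h1 hr)]
      simp
    · rw [hb]
      simp only [if_neg hr, if_neg (fun h => hr (h2 h)), hsgn]
      rcases c with ⟨i, j⟩
      simp
  -- finrank of ker (fnl a) is I + J - 1
  have hrange : LinearMap.range (fnl a) = ⊤ := by
    rw [Submodule.eq_top_iff']
    intro r
    have h1 : fnl a (Pi.single u₀ 1) = a u₀ := fnl_single a u₀
    have h2 : a u₀ = sgn u₀ := by rw [ha]; simp [SimpleGraph.Reachable.refl]
    refine ⟨(r / sgn u₀) • (Pi.single u₀ 1 : (Fin I ⊕ Fin J) → ℝ), ?_⟩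
    rw [map_smul, h1, h2, smul_eq_mul, div_mul_cancel₀]
    exact sgn_ne u₀
  have hdim : Module.finrank ℝ (LinearMap.ker (fnl a)) = I + J - 1 := by
    have := LinearMap.finrank_range_add_finrank_ker (fnl (I := I) (J := J) a)
    rw [hrange, finrank_top, Module.finrank_self, Module.finrank_fintype_fun_eq_card] at this
    simp only [Fintype.card_sum, Fintype.card_fin] at this
    omega
  have hWdim : Module.finrank ℝ W = I + J - 1 := by
    have := hind
    rw [linearIndependent_iff_card_eq_finrank_span, range_inc_eq, Fintype.card_coe, hcard] at this
    exact this.symm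
  have hWeq : W = LinearMap.ker (fnl a) :=
    Submodule.eq_of_le_of_finrank_le hWa (by omega)
  have hw₀ : Pi.single w₀ (1:ℝ) ∈ LinearMap.ker (fnl a) := by
    rw [LinearMap.mem_ker, fnl_single, ha]
    simp [hur]
  rw [← hWeq] at hw₀
  have := hWb hw₀
  rw [LinearMap.mem_ker, fnl_single, hb] at this
  simp only [if_neg hur] at this
  exact sgn_ne w₀ this

lemma preconn_del {V : Type*} {G : SimpleGraph V} {v w : V} (hG : G.Preconnected)
    (h : (G \ SimpleGraph.fromEdgeSet {s(v, w)}).Reachable v w) :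
    (G \ SimpleGraph.fromEdgeSet {s(v, w)}).Preconnected := by
  intro a b
  obtain ⟨p⟩ := hG a b
  induction p with
  | nil => exact SimpleGraph.Reachable.refl _
  | @cons a x c hadj p ih =>
      refine SimpleGraph.Reachable.trans ?_ ih
      by_cases he : s(a, x) = s(v, w)
      · rw [Sym2.eq_iff] at he
        rcases he with ⟨rfl, rfl⟩ | ⟨rfl, rfl⟩
        · exact h
        · exact h.symm
      · refine SimpleGraph.Adj.reachable ?_
        rw [SimpleGraph.sdiff_adj, SimpleGraph.fromEdgeSet_adj]
        exact ⟨hadj, fun hh => he hh.1⟩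

lemma cellGraph_erase {I J : ℕ} (S : Finset (Fin I × Fin J)) (i : Fin I) (j : Fin J) :
    cellGraph (S.erase (i, j)) =
      cellGraph S \ SimpleGraph.fromEdgeSet {s(Sum.inl i, Sum.inr j)} := by
  ext u v
  rw [SimpleGraph.sdiff_adj, SimpleGraph.fromEdgeSet_adj]
  constructor
  · rintro (⟨i', j', rfl, rfl, hm⟩ | ⟨i', j', rfl, rfl, hm⟩)
    · rw [Finset.mem_erase] at hm
      refine ⟨Or.inl ⟨i', j', rfl, rfl, hm.2⟩, ?_⟩
      rintro ⟨he, -⟩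
      rw [Set.mem_singleton_iff, Sym2.eq_iff] at he
      rcases he with ⟨h1, h2⟩ | ⟨h1, h2⟩
      · exact hm.1 (by rw [Sum.inl.injEq] at h1; rw [Sum.inr.injEq] at h2; rw [h1, h2])
      · exact Sum.inl_ne_inr h1
    · rw [Finset.mem_erase] at hm
      refine ⟨Or.inr ⟨i', j', rfl, rfl, hm.2⟩, ?_⟩
      rintro ⟨he, -⟩
      rw [Set.mem_singleton_iff, Sym2.eq_iff] at he
      rcases he with ⟨h1, h2⟩ | ⟨h1, h2⟩
      · exact Sum.inl_ne_inr h2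
      · exact hm.1 (by rw [Sum.inr.injEq] at h1; rw [Sum.inl.injEq] at h2; rw [h2, h1])
  · rintro ⟨(⟨i', j', rfl, rfl, hm⟩ | ⟨i', j', rfl, rfl, hm⟩), hne⟩
    · refine Or.inl ⟨i', j', rfl, rfl, Finset.mem_erase.2 ⟨?_, hm⟩⟩
      intro hpair
      rw [Prod.mk.injEq] at hpair
      obtain ⟨rfl, rfl⟩ := hpair
      exact hne ⟨Set.mem_singleton _, Sum.inl_ne_inr⟩
    · refine Or.inr ⟨i', j', rfl, rfl, Finset.mem_erase.2 ⟨?_, hm⟩⟩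
      intro hpair
      rw [Prod.mk.injEq] at hpair
      obtain ⟨rfl, rfl⟩ := hpair
      refine hne ⟨?_, Sum.inr_ne_inl⟩
      rw [Set.mem_singleton_iff]
      exact Sym2.eq_swap

lemma acyclic_of_conn {I J : ℕ} (hI : 1 ≤ I) (hJ : 1 ≤ J) {S : Finset (Fin I × Fin J)}
    (hcard : S.card = I + J - 1) (hconn : (cellGraph S).Preconnected) :
    (cellGraph S).IsAcyclic := by
  intro u p hp
  have hlen := hp.three_le_length
  have hne : p.edges ≠ [] := by
    intro h
    have h2 := p.length_edges
    rw [h] at h2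
    simp at h2
    omega
  obtain ⟨e, he⟩ := List.exists_mem_of_ne_nil _ hne
  have heS : e ∈ (cellGraph S).edgeSet := p.edges_subset_edgeSet he
  -- e = s(inl i, inr j) with (i,j) ∈ S
  obtain ⟨i, j, rfl, hm⟩ : ∃ i j, e = s(Sum.inl i, Sum.inr j) ∧ (i, j) ∈ S := by
    induction e with
    | h x y =>
      rcases heS with ⟨i', j', rfl, rfl, hm⟩ | ⟨i', j', rfl, rfl, hm⟩
      · exact ⟨i', j', rfl, hm⟩
      · exact ⟨i', j', Sym2.eq_swap, hm⟩
  have hreach : (cellGraph S \ SimpleGraph.fromEdgeSet {s(Sum.inl i, Sum.inr j)}).Reachable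
      (Sum.inl i) (Sum.inr j) :=
    (SimpleGraph.adj_and_reachable_delete_edges_iff_exists_cycle.2 ⟨u, p, hp, he⟩).2
  have hpre : (cellGraph (S.erase (i, j))).Preconnected := by
    rw [cellGraph_erase]
    exact preconn_del hconn hreach
  have := card_bound hI hpre
  rw [Finset.card_erase_of_mem hm, hcard] at this
  omega

section DesignInc

variable {I J : ℕ} {S : Finset (Fin I × Fin J)}

/-- row sums -/
noncomputable def R (g : S → ℝ) (i : Fin I) : ℝ :=
  ∑ c : S, (if (c : Fin I × Fin J).1 = i then g c else 0)

noncomputable def Cx (g : S → ℝ) (j : Fin J) : ℝ :=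
  ∑ c : S, (if (c : Fin I × Fin J).2 = j then g c else 0)

lemma sum_R (g : S → ℝ) : ∑ i : Fin I, R g i = ∑ c : S, g c := by
  simp only [R]
  rw [Finset.sum_comm]
  refine Finset.sum_congr rfl fun c _ => ?_
  rw [Finset.sum_ite_eq]
  simp

lemma sum_Cx (g : S → ℝ) : ∑ j : Fin J, Cx g j = ∑ c : S, g c := by
  simp only [Cx]
  rw [Finset.sum_comm]
  refine Finset.sum_congr rfl fun c _ => ?_
  rw [Finset.sum_ite_eq]
  simp

lemma inc_sum_apply_inl (g : S → ℝ) (i : Fin I) :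
    (∑ c : S, g c • inc c.val) (Sum.inl i) = R g i := by
  rw [Finset.sum_apply]
  refine Finset.sum_congr rfl fun c _ => ?_
  simp only [Pi.smul_apply, smul_eq_mul, inc]
  rw [if_neg (Sum.inl_ne_inr)]
  simp only [Sum.inl.injEq, add_zero]
  by_cases h : (c : Fin I × Fin J).1 = i
  · rw [if_pos h.symm, if_pos h]; ring
  · rw [if_neg (fun hh => h hh.symm), if_neg h]; ring

lemma inc_sum_apply_inr (g : S → ℝ) (j : Fin J) :
    (∑ c : S, g c • inc c.val) (Sum.inr j) = Cx g j := by
  rw [Finset.sum_apply]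
  refine Finset.sum_congr rfl fun c _ => ?_
  simp only [Pi.smul_apply, smul_eq_mul, inc]
  rw [if_neg (Sum.inr_ne_inl)]
  simp only [Sum.inr.injEq, zero_add]
  by_cases h : (c : Fin I × Fin J).2 = j
  · rw [if_pos h.symm, if_pos h]; ring
  · rw [if_neg (fun hh => h hh.symm), if_neg h]; ring

lemma design_sum_apply_inl (g : S → ℝ) :
    (∑ c : S, g c • designCol I J c.val) (Sum.inl ()) = ∑ c : S, g c := by
  rw [Finset.sum_apply]
  refine Finset.sum_congr rfl fun c _ => ?_
  simp [designCol]

lemma design_sum_apply_row (g : S → ℝ) (a : Fin (I - 1)) (ha : (a : ℕ) < I) :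
    (∑ c : S, g c • designCol I J c.val) (Sum.inr (Sum.inl a)) = R g ⟨a, ha⟩ := by
  rw [Finset.sum_apply]
  refine Finset.sum_congr rfl fun c _ => ?_
  simp only [Pi.smul_apply, smul_eq_mul, designCol, R]
  have : ((c : Fin I × Fin J).1 : ℕ) = (a : ℕ) ↔ (c : Fin I × Fin J).1 = ⟨a, ha⟩ := by
    rw [Fin.ext_iff]
  by_cases h : ((c : Fin I × Fin J).1 : ℕ) = (a : ℕ)
  · rw [if_pos h, if_pos (this.1 h)]; ring
  · rw [if_neg h, if_neg (fun hh => h (this.2 hh))]; ring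

lemma design_sum_apply_col (g : S → ℝ) (b : Fin (J - 1)) (hb : (b : ℕ) < J) :
    (∑ c : S, g c • designCol I J c.val) (Sum.inr (Sum.inr b)) = Cx g ⟨b, hb⟩ := by
  rw [Finset.sum_apply]
  refine Finset.sum_congr rfl fun c _ => ?_
  simp only [Pi.smul_apply, smul_eq_mul, designCol, Cx]
  have : ((c : Fin I × Fin J).2 : ℕ) = (b : ℕ) ↔ (c : Fin I × Fin J).2 = ⟨b, hb⟩ := by
    rw [Fin.ext_iff]
  by_cases h : ((c : Fin I × Fin J).2 : ℕ) = (b : ℕ)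
  · rw [if_pos h, if_pos (this.1 h)]; ring
  · rw [if_neg h, if_neg (fun hh => h (this.2 hh))]; ring

lemma design_iff_inc (hI : 1 ≤ I) (hJ : 1 ≤ J) (g : S → ℝ) :
    ∑ c : S, g c • designCol I J c.val = 0 ↔ ∑ c : S, g c • inc c.val = 0 := by
  constructor
  · intro hd
    have htot : ∑ c : S, g c = 0 := by
      have := congrFun hd (Sum.inl ())
      rwa [design_sum_apply_inl] at this
    have hrowlt : ∀ i : Fin I, (i : ℕ) < I - 1 → R g i = 0 := by
      intro i hi
      have := congrFun hd (Sum.inr (Sum.inl ⟨(i : ℕ), hi⟩))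
      rwa [design_sum_apply_row g _ (by omega : ((⟨(i : ℕ), hi⟩ : Fin (I-1)) : ℕ) < I)] at this
    have hrow : ∀ i : Fin I, R g i = 0 := by
      intro i
      by_cases hi : (i : ℕ) < I - 1
      · exact hrowlt i hi
      · have hieq : (i : ℕ) = I - 1 := by have := i.isLt; omega
        have hsplit := Finset.add_sum_erase Finset.univ (R g) (Finset.mem_univ i)
        rw [sum_R, htot] at hsplit
        have hz : ∑ i' ∈ Finset.univ.erase i, R g i' = 0 := by
          refine Finset.sum_eq_zero fun i' hi' => ?_
          have hne := (Finset.mem_erase.1 hi').1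
          refine hrowlt i' ?_
          have := i'.isLt
          rcases Nat.lt_or_ge (i' : ℕ) (I - 1) with h | h
          · exact h
          · exfalso; exact hne (Fin.ext (by omega))
        rw [hz] at hsplit
        linarith
    have hcollt : ∀ j : Fin J, (j : ℕ) < J - 1 → Cx g j = 0 := by
      intro j hj
      have := congrFun hd (Sum.inr (Sum.inr ⟨(j : ℕ), hj⟩))
      rwa [design_sum_apply_col g _ (by omega : ((⟨(j : ℕ), hj⟩ : Fin (J-1)) : ℕ) < J)] at this
    have hcol : ∀ j : Fin J, Cx g j = 0 := by
      intro j
      by_cases hj : (j : ℕ) < J - 1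
      · exact hcollt j hj
      · have hsplit := Finset.add_sum_erase Finset.univ (Cx g) (Finset.mem_univ j)
        rw [sum_Cx, htot] at hsplit
        have hz : ∑ j' ∈ Finset.univ.erase j, Cx g j' = 0 := by
          refine Finset.sum_eq_zero fun j' hj' => ?_
          have hne := (Finset.mem_erase.1 hj').1
          refine hcollt j' ?_
          have h1 := j'.isLt
          have h2 := j.isLt
          rcases Nat.lt_or_ge (j' : ℕ) (J - 1) with h | h
          · exact h
          · exfalso; exact hne (Fin.ext (by omega))
        rw [hz] at hsplit
        linarith
    funext u
    rcases u with i | j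
    · rw [inc_sum_apply_inl]; exact hrow i
    · rw [inc_sum_apply_inr]; exact hcol j
  · intro hi
    have hrow : ∀ i : Fin I, R g i = 0 := fun i => by
      have := congrFun hi (Sum.inl i)
      rwa [inc_sum_apply_inl] at this
    have hcol : ∀ j : Fin J, Cx g j = 0 := fun j => by
      have := congrFun hi (Sum.inr j)
      rwa [inc_sum_apply_inr] at this
    have htot : ∑ c : S, g c = 0 := by
      rw [← sum_R g]
      exact Finset.sum_eq_zero fun i _ => hrow i
    funext r
    rcases r with u | a | b
    · rw [design_sum_apply_inl]
      simpa using htot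
    · rw [design_sum_apply_row g a (by have := a.isLt; omega)]
      simpa using hrow _
    · rw [design_sum_apply_col g b (by have := b.isLt; omega)]
      simpa using hcol _

lemma indep_design_iff_indep_inc (hI : 1 ≤ I) (hJ : 1 ≤ J) :
    LinearIndependent ℝ (fun c : S => designCol I J c.val) ↔
      LinearIndependent ℝ (fun c : S => inc c.val) := by
  rw [Fintype.linearIndependent_iff, Fintype.linearIndependent_iff]
  constructor
  · intro h g hg
    exact h g ((design_iff_inc hI hJ g).2 hg)
  · intro h g hg
    exact h g ((design_iff_inc hI hJ g).1 hg)

end DesignInc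

section Cycles

variable {I J : ℕ}

def Exact2 (C : Finset (Fin I × Fin J)) : Prop :=
  (∀ i ∈ C.image Prod.fst, (C.filter fun c => c.1 = i).card = 2) ∧
  (∀ j ∈ C.image Prod.snd, (C.filter fun c => c.2 = j).card = 2)

lemma rdeg_pos {T : Finset (Fin I × Fin J)} {i : Fin I} (hi : i ∈ T.image Prod.fst) :
    1 ≤ (T.filter fun c => c.1 = i).card := by
  obtain ⟨c, hc, rfl⟩ := Finset.mem_image.1 hi
  rw [Nat.one_le_iff_ne_zero, Ne, Finset.card_eq_zero, ← Ne, ← Finset.nonempty_iff_ne_empty]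
  exact ⟨c, Finset.mem_filter.2 ⟨hc, rfl⟩⟩

lemma cdeg_pos {T : Finset (Fin I × Fin J)} {j : Fin J} (hj : j ∈ T.image Prod.snd) :
    1 ≤ (T.filter fun c => c.2 = j).card := by
  obtain ⟨c, hc, rfl⟩ := Finset.mem_image.1 hj
  rw [Nat.one_le_iff_ne_zero, Ne, Finset.card_eq_zero, ← Ne, ← Finset.nonempty_iff_ne_empty]
  exact ⟨c, Finset.mem_filter.2 ⟨hc, rfl⟩⟩

lemma card_eq_sum_rdeg (T : Finset (Fin I × Fin J)) :
    T.card = ∑ i ∈ T.image Prod.fst, (T.filter fun c => c.1 = i).card :=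
  Finset.card_eq_sum_card_fiberwise fun c hc => Finset.mem_image_of_mem _ hc

lemma card_eq_sum_cdeg (T : Finset (Fin I × Fin J)) :
    T.card = ∑ j ∈ T.image Prod.snd, (T.filter fun c => c.2 = j).card :=
  Finset.card_eq_sum_card_fiberwise fun c hc => Finset.mem_image_of_mem _ hc

lemma lemY : ∀ T : Finset (Fin I × Fin J), T.Nonempty →
    (T.image Prod.fst).card + (T.image Prod.snd).card ≤ T.card →
    ∃ C, C ⊆ T ∧ C.Nonempty ∧ Exact2 C := by
  intro T
  induction T using Finset.strongInduction with
  | _ T ih =>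
  intro hne hcount
  have hRpos : 1 ≤ (T.image Prod.fst).card := Finset.card_pos.2 (hne.image _)
  have hCpos : 1 ≤ (T.image Prod.snd).card := Finset.card_pos.2 (hne.image _)
  by_cases hc1 : ∃ c ∈ T, (T.filter fun d => d.1 = c.1).card = 1 ∨
      (T.filter fun d => d.2 = c.2).card = 1
  · obtain ⟨c, hcT, hdeg⟩ := hc1
    set T' := T.erase c with hT'
    have hss : T' ⊂ T := Finset.erase_ssubset hcT
    have hcardT' : T'.card = T.card - 1 := Finset.card_erase_of_mem hcT
    have hne' : T'.Nonempty := by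
      rw [← Finset.card_pos, hcardT']
      omega
    have hsub1 : T'.image Prod.fst ⊆ T.image Prod.fst :=
      Finset.image_subset_image (Finset.erase_subset _ _)
    have hsub2 : T'.image Prod.snd ⊆ T.image Prod.snd :=
      Finset.image_subset_image (Finset.erase_subset _ _)
    have hinv : (T'.image Prod.fst).card + (T'.image Prod.snd).card ≤ T'.card := by
      rcases hdeg with hdeg | hdeg
      · have hsubR : T'.image Prod.fst ⊆ (T.image Prod.fst).erase c.1 := by
          intro i hi
          obtain ⟨d, hd, rfl⟩ := Finset.mem_image.1 hi
          have hdT := Finset.mem_of_mem_erase hd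
          refine Finset.mem_erase.2 ⟨?_, Finset.mem_image_of_mem _ hdT⟩
          intro heq
          have hdf : d ∈ T.filter fun e => e.1 = c.1 := Finset.mem_filter.2 ⟨hdT, heq⟩
          have hcf : c ∈ T.filter fun e => e.1 = c.1 := Finset.mem_filter.2 ⟨hcT, rfl⟩
          obtain ⟨x, hx⟩ := Finset.card_eq_one.1 hdeg
          rw [hx, Finset.mem_singleton] at hdf hcf
          exact (Finset.mem_erase.1 hd).1 (hdf.trans hcf.symm)
        have h1 : (T'.image Prod.fst).card ≤ (T.image Prod.fst).card - 1 := by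
          have := Finset.card_le_card hsubR
          rw [Finset.card_erase_of_mem (Finset.mem_image_of_mem _ hcT)] at this
          exact this
        have h2 : (T'.image Prod.snd).card ≤ (T.image Prod.snd).card :=
          Finset.card_le_card hsub2
        omega
      · have hsubC : T'.image Prod.snd ⊆ (T.image Prod.snd).erase c.2 := by
          intro j hj
          obtain ⟨d, hd, rfl⟩ := Finset.mem_image.1 hj
          have hdT := Finset.mem_of_mem_erase hd
          refine Finset.mem_erase.2 ⟨?_, Finset.mem_image_of_mem _ hdT⟩
          intro heq
          have hdf : d ∈ T.filter fun e => e.2 = c.2 := Finset.mem_filter.2 ⟨hdT, heq⟩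
          have hcf : c ∈ T.filter fun e => e.2 = c.2 := Finset.mem_filter.2 ⟨hcT, rfl⟩
          obtain ⟨x, hx⟩ := Finset.card_eq_one.1 hdeg
          rw [hx, Finset.mem_singleton] at hdf hcf
          exact (Finset.mem_erase.1 hd).1 (hdf.trans hcf.symm)
        have h1 : (T'.image Prod.snd).card ≤ (T.image Prod.snd).card - 1 := by
          have := Finset.card_le_card hsubC
          rw [Finset.card_erase_of_mem (Finset.mem_image_of_mem _ hcT)] at this
          exact this
        have h2 : (T'.image Prod.fst).card ≤ (T.image Prod.fst).card :=
          Finset.card_le_card hsub1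
        omega
    obtain ⟨C, hCsub, hCne, hCex⟩ := ih T' hss hne' hinv
    exact ⟨C, hCsub.trans (Finset.erase_subset _ _), hCne, hCex⟩
  · push_neg at hc1
    have hmin : ∀ c ∈ T, 2 ≤ (T.filter fun d => d.1 = c.1).card ∧
        2 ≤ (T.filter fun d => d.2 = c.2).card := by
      intro c hc
      obtain ⟨h1, h2⟩ := hc1 c hc
      have p1 := rdeg_pos (Finset.mem_image_of_mem Prod.fst hc)
      have p2 := cdeg_pos (Finset.mem_image_of_mem Prod.snd hc)
      omega
    by_cases hc3 : ∃ c ∈ T, 3 ≤ (T.filter fun d => d.1 = c.1).card ∨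
        3 ≤ (T.filter fun d => d.2 = c.2).card
    · obtain ⟨c, hcT, hdeg⟩ := hc3
      have hE2R : 2 * (T.image Prod.fst).card ≤ T.card := by
        rw [card_eq_sum_rdeg T]
        calc 2 * (T.image Prod.fst).card = (T.image Prod.fst).card • 2 := by
              rw [smul_eq_mul]; ring
          _ ≤ _ := Finset.card_nsmul_le_sum _ _ _ (fun i hi => by
              obtain ⟨d, hd, rfl⟩ := Finset.mem_image.1 hi
              exact (hmin d hd).1)
      have hE2C : 2 * (T.image Prod.snd).card ≤ T.card := by
        rw [card_eq_sum_cdeg T]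
        calc 2 * (T.image Prod.snd).card = (T.image Prod.snd).card • 2 := by
              rw [smul_eq_mul]; ring
          _ ≤ _ := Finset.card_nsmul_le_sum _ _ _ (fun j hj => by
              obtain ⟨d, hd, rfl⟩ := Finset.mem_image.1 hj
              exact (hmin d hd).2)
      have hEbig : (T.image Prod.fst).card + (T.image Prod.snd).card + 1 ≤ T.card := by
        rcases hdeg with hdeg | hdeg
        · have : 2 * (T.image Prod.fst).card + 1 ≤ T.card := by
            rw [card_eq_sum_rdeg T]
            have hmem : c.1 ∈ T.image Prod.fst := Finset.mem_image_of_mem _ hcT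
            rw [← Finset.add_sum_erase _ _ hmem]
            have hrest : ((T.image Prod.fst).erase c.1).card • 2 ≤
                ∑ i ∈ (T.image Prod.fst).erase c.1, (T.filter fun d => d.1 = i).card :=
              Finset.card_nsmul_le_sum _ _ _ (fun i hi => by
                obtain ⟨d, hd, rfl⟩ := Finset.mem_image.1 (Finset.mem_of_mem_erase hi)
                exact (hmin d hd).1)
            rw [Finset.card_erase_of_mem hmem] at hrest
            rw [smul_eq_mul] at hrest
            omega
          omega
        · have : 2 * (T.image Prod.snd).card + 1 ≤ T.card := by
            rw [card_eq_sum_cdeg T]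
            have hmem : c.2 ∈ T.image Prod.snd := Finset.mem_image_of_mem _ hcT
            rw [← Finset.add_sum_erase _ _ hmem]
            have hrest : ((T.image Prod.snd).erase c.2).card • 2 ≤
                ∑ j ∈ (T.image Prod.snd).erase c.2, (T.filter fun d => d.2 = j).card :=
              Finset.card_nsmul_le_sum _ _ _ (fun j hj => by
                obtain ⟨d, hd, rfl⟩ := Finset.mem_image.1 (Finset.mem_of_mem_erase hj)
                exact (hmin d hd).2)
            rw [Finset.card_erase_of_mem hmem] at hrest
            rw [smul_eq_mul] at hrest
            omega
          omega
      set T' := T.erase c with hT'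
      have hss : T' ⊂ T := Finset.erase_ssubset hcT
      have hcardT' : T'.card = T.card - 1 := Finset.card_erase_of_mem hcT
      have hne' : T'.Nonempty := by
        rw [← Finset.card_pos, hcardT']
        omega
      have hinv : (T'.image Prod.fst).card + (T'.image Prod.snd).card ≤ T'.card := by
        have h1 : (T'.image Prod.fst).card ≤ (T.image Prod.fst).card :=
          Finset.card_le_card (Finset.image_subset_image (Finset.erase_subset _ _))
        have h2 : (T'.image Prod.snd).card ≤ (T.image Prod.snd).card :=
          Finset.card_le_card (Finset.image_subset_image (Finset.erase_subset _ _))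
        omega
      obtain ⟨C, hCsub, hCne, hCex⟩ := ih T' hss hne' hinv
      exact ⟨C, hCsub.trans (Finset.erase_subset _ _), hCne, hCex⟩
    · push_neg at hc3
      refine ⟨T, Finset.Subset.refl _, hne, ?_, ?_⟩
      · intro i hi
        obtain ⟨d, hd, rfl⟩ := Finset.mem_image.1 hi
        have := (hmin d hd).1
        have := (hc3 d hd).1
        omega
      · intro j hj
        obtain ⟨d, hd, rfl⟩ := Finset.mem_image.1 hj
        have := (hmin d hd).2
        have := (hc3 d hd).2
        omega

lemma exact2_isKCycle {C : Finset (Fin I × Fin J)} (hne : C.Nonempty) (h : Exact2 C) :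
    2 ≤ (C.image Prod.fst).card ∧ IsKCycle ((C.image Prod.fst).card) C := by
  obtain ⟨hrow, hcol⟩ := h
  set k := (C.image Prod.fst).card with hk
  have hcard2 : C.card = 2 * k := by
    rw [card_eq_sum_rdeg C]
    rw [Finset.sum_congr rfl hrow]
    rw [Finset.sum_const, smul_eq_mul]
    ring
  have hcardc : C.card = 2 * (C.image Prod.snd).card := by
    rw [card_eq_sum_cdeg C]
    rw [Finset.sum_congr rfl hcol]
    rw [Finset.sum_const, smul_eq_mul]
    ring
  have hcols : (C.image Prod.snd).card = k := by omega
  have hkpos : 1 ≤ k := Finset.card_pos.2 (hne.image _)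
  have hk2 : 2 ≤ k := by
    by_contra hlt
    have hk1 : k = 1 := by omega
    obtain ⟨i, hi⟩ := Finset.card_eq_one.1 hk1
    obtain ⟨j, hj⟩ := Finset.card_eq_one.1 (hcols.trans hk1)
    have hsub : C ⊆ {(i, j)} := by
      intro c hc
      have h1 : c.1 = i := by
        have := Finset.mem_image_of_mem Prod.fst hc
        rw [hi, Finset.mem_singleton] at this
        exact this
      have h2 : c.2 = j := by
        have := Finset.mem_image_of_mem Prod.snd hc
        rw [hj, Finset.mem_singleton] at this
        exact this
      rw [Finset.mem_singleton, ← h1, ← h2]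
    have := Finset.card_le_card hsub
    rw [Finset.card_singleton] at this
    omega
  exact ⟨hk2, hk2, hcard2, rfl, hcols, hrow, hcol⟩

lemma exists_cycle_of_dep {S : Finset (Fin I × Fin J)} (g : S → ℝ)
    (hg : ∑ c : S, g c • inc c.val = 0) (c₀ : S) (hg0 : g c₀ ≠ 0) :
    ∃ k, 2 ≤ k ∧ ∃ C ⊆ S, IsKCycle k C := by
  classical
  set g' : (Fin I × Fin J) → ℝ := fun c => if h : c ∈ S then g ⟨c, h⟩ else 0 with hg'
  set T := S.filter (fun c => g' c ≠ 0) with hT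
  have hTsub : T ⊆ S := Finset.filter_subset _ _
  have hTne : T.Nonempty := by
    refine ⟨c₀.val, Finset.mem_filter.2 ⟨c₀.property, ?_⟩⟩
    rw [hg']
    simp only [c₀.property, dif_pos]
    simpa using hg0
  -- row sums over T vanish
  have hrowsum : ∀ i : Fin I, ∑ c ∈ T.filter (fun c => c.1 = i), g' c = 0 := by
    intro i
    have h0 : R g i = 0 := by
      have := congrFun hg (Sum.inl i)
      rw [inc_sum_apply_inl] at this
      simpa using this
    rw [R] at h0
    have hstep : ∑ c : S, (if (c : Fin I × Fin J).1 = i then g c else 0)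
        = ∑ c ∈ S, (if c.1 = i then g' c else 0) := by
      rw [← Finset.sum_attach S (fun c => if c.1 = i then g' c else 0)]
      refine Finset.sum_congr rfl fun c _ => ?_
      rw [hg']
      simp only [c.property, dif_pos]
    rw [hstep] at h0
    calc ∑ c ∈ T.filter (fun c => c.1 = i), g' c
        = ∑ c ∈ (S.filter fun c => c.1 = i).filter (fun c => g' c ≠ 0), g' c := by
          rw [hT, Finset.filter_comm]
      _ = ∑ c ∈ S.filter (fun c => c.1 = i), g' c := Finset.sum_filter_ne_zero _
      _ = ∑ c ∈ S, if c.1 = i then g' c else 0 := Finset.sum_filter _ _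
      _ = 0 := h0
  have hcolsum : ∀ j : Fin J, ∑ c ∈ T.filter (fun c => c.2 = j), g' c = 0 := by
    intro j
    have h0 : Cx g j = 0 := by
      have := congrFun hg (Sum.inr j)
      rw [inc_sum_apply_inr] at this
      simpa using this
    rw [Cx] at h0
    have hstep : ∑ c : S, (if (c : Fin I × Fin J).2 = j then g c else 0)
        = ∑ c ∈ S, (if c.2 = j then g' c else 0) := by
      rw [← Finset.sum_attach S (fun c => if c.2 = j then g' c else 0)]
      refine Finset.sum_congr rfl fun c _ => ?_
      rw [hg']
      simp only [c.property, dif_pos]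
    rw [hstep] at h0
    calc ∑ c ∈ T.filter (fun c => c.2 = j), g' c
        = ∑ c ∈ (S.filter fun c => c.2 = j).filter (fun c => g' c ≠ 0), g' c := by
          rw [hT, Finset.filter_comm]
      _ = ∑ c ∈ S.filter (fun c => c.2 = j), g' c := Finset.sum_filter_ne_zero _
      _ = ∑ c ∈ S, if c.2 = j then g' c else 0 := Finset.sum_filter _ _
      _ = 0 := h0
  -- min degree 2
  have hminR : ∀ i ∈ T.image Prod.fst, 2 ≤ (T.filter fun c => c.1 = i).card := by
    intro i hi
    have h1 := rdeg_pos hi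
    rcases Nat.lt_or_ge (T.filter fun c => c.1 = i).card 2 with h | h
    · exfalso
      have hone : (T.filter fun c => c.1 = i).card = 1 := by omega
      obtain ⟨d, hd⟩ := Finset.card_eq_one.1 hone
      have := hrowsum i
      rw [hd, Finset.sum_singleton] at this
      have hdT : d ∈ T := by
        have : d ∈ T.filter fun c => c.1 = i := by rw [hd]; exact Finset.mem_singleton_self d
        exact Finset.mem_of_mem_filter _ this
      exact (Finset.mem_filter.1 hdT).2 this
    · exact h
  have hminC : ∀ j ∈ T.image Prod.snd, 2 ≤ (T.filter fun c => c.2 = j).card := by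
    intro j hj
    have h1 := cdeg_pos hj
    rcases Nat.lt_or_ge (T.filter fun c => c.2 = j).card 2 with h | h
    · exfalso
      have hone : (T.filter fun c => c.2 = j).card = 1 := by omega
      obtain ⟨d, hd⟩ := Finset.card_eq_one.1 hone
      have := hcolsum j
      rw [hd, Finset.sum_singleton] at this
      have hdT : d ∈ T := by
        have : d ∈ T.filter fun c => c.2 = j := by rw [hd]; exact Finset.mem_singleton_self d
        exact Finset.mem_of_mem_filter _ this
      exact (Finset.mem_filter.1 hdT).2 this
    · exact h
  -- counting
  have h2R : 2 * (T.image Prod.fst).card ≤ T.card := by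
    rw [card_eq_sum_rdeg T]
    calc 2 * (T.image Prod.fst).card = (T.image Prod.fst).card • 2 := by
          rw [smul_eq_mul]; ring
      _ ≤ _ := Finset.card_nsmul_le_sum _ _ _ hminR
  have h2C : 2 * (T.image Prod.snd).card ≤ T.card := by
    rw [card_eq_sum_cdeg T]
    calc 2 * (T.image Prod.snd).card = (T.image Prod.snd).card • 2 := by
          rw [smul_eq_mul]; ring
      _ ≤ _ := Finset.card_nsmul_le_sum _ _ _ hminC
  obtain ⟨C, hCsub, hCne, hCex⟩ := lemY T hTne (by omega)
  obtain ⟨hk2, hkc⟩ := exact2_isKCycle hCne hCex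
  exact ⟨(C.image Prod.fst).card, hk2, C, hCsub.trans hTsub, hkc⟩

end Cycles

end Aux

theorem stmt8 (I J : ℕ) (hI : 1 ≤ I) (hIJ : I ≤ J)
    (S : Finset (Fin I × Fin J)) (hcard : S.card = I + J - 1) :
    (((∀ i : Fin I, ∃ j : Fin J, (i, j) ∈ S) ∧
      (∀ j : Fin J, ∃ i : Fin I, (i, j) ∈ S) ∧
      (∀ k, 2 ≤ k → ∀ C ⊆ S, ¬ IsKCycle k C)) → (cellGraph S).IsTree) ∧
    (LinearIndependent ℝ (fun c : S => designCol I J c.val) ↔ (cellGraph S).IsTree) := by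
  have hJ : 1 ≤ J := le_trans hI hIJ
  have tree_of_indep : LinearIndependent ℝ (fun c : S => Aux.inc c.val) →
      (cellGraph S).IsTree := by
    intro hind
    have hconn := Aux.conn_of_indep hI hcard hind
    exact ⟨hconn, Aux.acyclic_of_conn hI hJ hcard hconn.preconnected⟩
  constructor
  · rintro ⟨-, -, hnc⟩
    refine tree_of_indep ?_
    rw [Fintype.linearIndependent_iff]
    intro g hg
    by_contra hng
    push_neg at hng
    obtain ⟨c₀, hc₀⟩ := hng
    obtain ⟨k, hk, C, hCsub, hC⟩ := Aux.exists_cycle_of_dep g hg c₀ hc₀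
    exact hnc k hk C hCsub hC
  · rw [Aux.indep_design_iff_indep_inc hI hJ]
    constructor
    · exact tree_of_indep
    · intro htree
      exact Aux.indep_of_conn hI hcard htree.isConnected.preconnected
end

section
/- The number of strictly minimal patterns for the independence model on an I×J table equals the number of spanning trees of the complete bipartite graph K_{I,J}, which is I^{J-1} · J^{I-1}. -/
open Matrix Finset Equiv

set_option linter.unusedSectionVars false
set_option maxHeartbeats 1600000

section Helpers
variable {m κ : Type*} [Fintype m] [DecidableEq m] [Fintype κ] [DecidableEq κ]

private lemma inner_perm_sum (A : Matrix m κ ℝ) (B : Matrix κ m ℝ) (g : m → κ) :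
    ∑ σ : Perm m, (∏ v, A v (g (σ v))) * (B.submatrix (g ∘ σ) id).det
      = (A.submatrix id g).det * (B.submatrix g id).det := by
  have h2 : (A.submatrix id g).det
      = ∑ σ : Perm m, ((Equiv.Perm.sign σ : ℤ) : ℝ) * ∏ v, A v (g (σ v)) := by
    rw [← Matrix.det_transpose, Matrix.det_apply']
    rfl
  rw [h2, Finset.sum_mul]
  refine Finset.sum_congr rfl fun σ _ => ?_
  have key : (B.submatrix (g ∘ σ) id) = (B.submatrix g id).submatrix σ id := rfl
  rw [key, Matrix.det_permute]
  ring

private lemma cauchy_binet (A : Matrix m κ ℝ) (B : Matrix κ m ℝ) (f : Finset κ → m → κ)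
    (hinj : ∀ S : Finset κ, S.card = Fintype.card m → Function.Injective (f S))
    (hmem : ∀ S : Finset κ, S.card = Fintype.card m → ∀ v, f S v ∈ S) :
    (A * B).det = ∑ S ∈ univ.powersetCard (Fintype.card m),
      (A.submatrix id (f S)).det * (B.submatrix (f S) id).det := by
  classical
  set T : (m → κ) → ℝ := fun r => (∏ v, A v (r v)) * (B.submatrix r id).det with hT
  have expand : (A * B).det = ∑ r : m → κ, T r := by
    have h0 : (A * B).det = Matrix.detRowAlternating (fun v => ∑ c, A v c • B c) := by
      congr 1
      ext v w
      simp [Matrix.mul_apply]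
    have h1 := (Matrix.detRowAlternating (R := ℝ) (n := m)).toMultilinearMap.map_sum
        (g := fun v c => A v c • B c)
    simp only [AlternatingMap.coe_multilinearMap] at h1
    rw [h0, h1]
    refine Finset.sum_congr rfl fun r _ => ?_
    have : (Matrix.detRowAlternating (fun v => A v (r v) • B (r v)) : ℝ)
        = (Matrix.of fun v w => A v (r v) * B (r v) w).det := rfl
    rw [this]; refine (Matrix.det_mul_column (fun v => A v (r v)) (B.submatrix r id)).trans ?_
    rfl
  have step1 : ∑ r : m → κ, T r
      = ∑ r ∈ univ.filter (fun r : m → κ => Function.Injective r), T r := by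
    rw [eq_comm]
    refine Finset.sum_subset (Finset.filter_subset _ _) ?_
    intro r _ hr
    simp only [Finset.mem_filter, Finset.mem_univ, true_and] at hr
    obtain ⟨a, b, hab, hne⟩ := Function.not_injective_iff.mp hr
    have h0 : (B.submatrix r id).det = 0 := by
      refine Matrix.det_zero_of_row_eq hne ?_
      funext w
      simp [Matrix.submatrix_apply, hab]
    show (∏ v, A v (r v)) * (B.submatrix r id).det = 0
    rw [h0, mul_zero]
  -- group by image
  have step2 : ∑ r ∈ univ.filter (fun r : m → κ => Function.Injective r), T r
      = ∑ S ∈ univ.powersetCard (Fintype.card m),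
          ∑ r ∈ univ.filter (fun r : m → κ => Function.Injective r ∧ univ.image r = S), T r := by
    rw [eq_comm]
    have := Finset.sum_fiberwise_of_maps_to (s := univ.filter (fun r : m → κ => Function.Injective r))
      (t := univ.powersetCard (Fintype.card m)) (g := fun r => univ.image r) (f := T) ?_
    · rw [← this]
      refine Finset.sum_congr rfl fun S _ => ?_
      congr 1
      rw [Finset.filter_filter]
    · intro r hr
      simp only [Finset.mem_filter, Finset.mem_univ, true_and] at hr
      rw [Finset.mem_powersetCard_univ, Finset.card_image_of_injective _ hr, Finset.card_univ]
  -- per-S regrouping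
  have step3 : ∀ S ∈ univ.powersetCard (Fintype.card m),
      ∑ r ∈ univ.filter (fun r : m → κ => Function.Injective r ∧ univ.image r = S), T r
      = ∑ σ : Perm m, T (f S ∘ σ) := by
    intro S hS
    rw [Finset.mem_powersetCard_univ] at hS
    have hfinj := hinj S hS
    have hcardS : Fintype.card ↥S = Fintype.card m := by
      rw [Fintype.card_coe, hS]
    have himg : univ.image (f S) = S := by
      refine Finset.eq_of_subset_of_card_le ?_ ?_
      · intro x hx
        simp only [Finset.mem_image, Finset.mem_univ, true_and] at hx
        obtain ⟨v, rfl⟩ := hx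
        exact hmem S hS v
      · rw [Finset.card_image_of_injective _ hfinj, Finset.card_univ, hS]
    rw [eq_comm]
    refine Finset.sum_bij (i := fun (σ : Perm m) _ => f S ∘ σ) ?_ ?_ ?_ ?_
    · intro σ _
      simp only [Finset.mem_filter, Finset.mem_univ, true_and]
      constructor
      · exact hfinj.comp σ.injective
      · have him2 : univ.image (f S ∘ σ) = univ.image (f S) := by
          ext x
          simp only [Finset.mem_image, Finset.mem_univ, true_and, Function.comp_apply]
          constructor
          · rintro ⟨v, rfl⟩; exact ⟨σ v, rfl⟩
          · rintro ⟨v, rfl⟩; exact ⟨σ.symm v, by simp⟩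
        rw [him2]; exact himg
    · intro σ _ σ' _ h
      exact Equiv.ext fun v => hfinj (congrFun h v)
    · intro r hr
      simp only [Finset.mem_filter, Finset.mem_univ, true_and] at hr
      obtain ⟨hrinj, hrimg⟩ := hr
      -- build the permutation
      have hrv : ∀ v, r v ∈ S := by
        intro v; rw [← hrimg]; exact Finset.mem_image_of_mem r (Finset.mem_univ v)
      let eS : m ≃ ↥S := Equiv.ofBijective (fun v => (⟨f S v, hmem S hS v⟩ : ↥S))
        ((Fintype.bijective_iff_injective_and_card _).mpr
          ⟨fun a b hab => hfinj (congrArg Subtype.val hab), hcardS.symm⟩)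
      let σ0 : m ≃ m := Equiv.ofBijective (fun v => eS.symm ⟨r v, hrv v⟩)
        ((Fintype.bijective_iff_injective_and_card _).mpr
          ⟨fun a b hab => hrinj (congrArg Subtype.val (eS.symm.injective hab)), rfl⟩)
      refine ⟨σ0, Finset.mem_univ _, funext fun v => ?_⟩
      have h1 : eS (σ0 v) = ⟨r v, hrv v⟩ := eS.apply_symm_apply _
      have h2 : (eS (σ0 v)).val = f S (σ0 v) := rfl
      show f S (σ0 v) = r v
      rw [← h2, h1]
    · intro σ _
      rfl
  rw [expand, step1, step2]
  refine Finset.sum_congr rfl fun S hS => ?_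
  rw [step3 S hS, ← inner_perm_sum A B (f S)]
  rfl

end Helpers

private lemma tu_det : ∀ (n : ℕ) (M : Matrix (Fin n) (Fin n) ℝ) (blk : Fin n → Bool),
    (∀ i j, M i j = 0 ∨ M i j = 1) →
    (∀ (j : Fin n) (b : Bool), ((univ.filter (fun i => blk i = b ∧ M i j ≠ 0)).card ≤ 1)) →
    M.det = 0 ∨ M.det = 1 ∨ M.det = -1 := by
  intro n
  induction n with
  | zero =>
    intro M blk _ _
    right; left
    exact Matrix.det_fin_zero
  | succ n ih =>
    intro M blk h01 hcol
    by_cases hz : ∃ j, ∀ i, M i j = 0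
    · obtain ⟨j, hj⟩ := hz
      left
      exact Matrix.det_eq_zero_of_column_eq_zero j hj
    push_neg at hz
    by_cases h1 : ∃ j i0, M i0 j = 1 ∧ ∀ i, i ≠ i0 → M i j = 0
    · -- Laplace expansion case
      obtain ⟨j0, i0, hM1, hMz⟩ := h1
      set σ : Perm (Fin (n+1)) := Equiv.swap 0 i0 with hσ
      set τ : Perm (Fin (n+1)) := Equiv.swap 0 j0 with hτ
      set M' : Matrix (Fin (n+1)) (Fin (n+1)) ℝ := M.submatrix σ τ with hM'
      have hdet' : M'.det = ((Perm.sign τ : ℤ) : ℝ) * (((Perm.sign σ : ℤ) : ℝ) * M.det) := by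
        have e1 : M' = (M.submatrix σ id).submatrix id τ := rfl
        rw [e1, Matrix.det_permute', Matrix.det_permute]
      have hpm : M.det = M'.det ∨ M.det = -M'.det := by
        rcases Int.units_eq_one_or (Perm.sign σ) with hs | hs <;>
          rcases Int.units_eq_one_or (Perm.sign τ) with ht | ht <;>
          rw [hs, ht] at hdet' <;> push_cast at hdet' <;> [left; right; right; left] <;>
          linarith
      have hτ0 : τ 0 = j0 := Equiv.swap_apply_left 0 j0
      have hσ0 : σ 0 = i0 := Equiv.swap_apply_left 0 i0
      have hcol0 : ∀ i : Fin (n+1), i ≠ 0 → M' i 0 = 0 := by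
        intro i hi
        have : σ i ≠ i0 := by
          rw [← hσ0]
          exact fun h => hi (σ.injective h)
        show M (σ i) (τ 0) = 0
        rw [hτ0]
        exact hMz _ this
      have h00 : M' 0 0 = 1 := by
        show M (σ 0) (τ 0) = 1
        rw [hσ0, hτ0]
        exact hM1
      set M'' : Matrix (Fin n) (Fin n) ℝ := M'.submatrix Fin.succ Fin.succ with hM''
      have hexp : M'.det = M''.det := by
        rw [Matrix.det_succ_column_zero]
        rw [Finset.sum_eq_single_of_mem 0 (Finset.mem_univ _)]
        · rw [h00]
          simp [Fin.succAbove_zero, hM'']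
        · intro i _ hi
          rw [hcol0 i hi]
          ring
      have hih := ih M'' (fun i => blk (σ i.succ)) (fun i j => h01 _ _) ?_
      · rcases hpm with h | h <;> rcases hih with h' | h' | h' <;>
          rw [hexp, h'] at h <;> simp [h]
      · intro j b
        refine le_trans (Finset.card_le_card_of_injOn (fun i => σ i.succ) ?_ ?_)
          (hcol (τ j.succ) b)
        · intro i hi
          simp only [Finset.mem_coe, Finset.mem_filter, Finset.mem_univ, true_and] at hi ⊢
          exact hi
        · exact ((σ.injective).comp (Fin.succ_injective n)).injOn
    · -- dependent rows case
      push_neg at h1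
      have hsplit : ∀ j : Fin (n+1),
          (univ.filter (fun i => M i j ≠ 0)).card
            = (univ.filter (fun i => blk i = true ∧ M i j ≠ 0)).card
              + (univ.filter (fun i => blk i = false ∧ M i j ≠ 0)).card := by
        intro j
        have hh := Finset.card_filter_add_card_filter_not
          (s := univ.filter (fun i => M i j ≠ 0)) (p := fun i => blk i = true)
        rw [Finset.filter_filter, Finset.filter_filter] at hh
        rw [← hh]
        congr 1 <;> · congr 1; ext i; simp [and_comm, Bool.not_eq_true]
      have hboth : ∀ j : Fin (n+1),
          (univ.filter (fun i => blk i = true ∧ M i j ≠ 0)).card = 1 ∧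
          (univ.filter (fun i => blk i = false ∧ M i j ≠ 0)).card = 1 := by
        intro j
        have ht := hcol j true
        have hf := hcol j false
        have hge : 1 ≤ (univ.filter (fun i => M i j ≠ 0)).card := by
          obtain ⟨i, hi⟩ := hz j
          exact Finset.card_pos.mpr ⟨i, by simp [hi]⟩
        have hne1 : (univ.filter (fun i => M i j ≠ 0)).card ≠ 1 := by
          intro hcard
          obtain ⟨i0, hi0⟩ := Finset.card_eq_one.mp hcard
          have hmem0 : i0 ∈ univ.filter (fun i => M i j ≠ 0) := hi0 ▸ Finset.mem_singleton_self i0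
          simp only [Finset.mem_filter, Finset.mem_univ, true_and] at hmem0
          have hone : M i0 j = 1 := (h01 i0 j).resolve_left hmem0
          have hall : ∀ i, i ≠ i0 → M i j = 0 := by
            intro i hi
            by_contra hMi
            have hmm : i ∈ univ.filter (fun i => M i j ≠ 0) := by simp [hMi]
            rw [hi0] at hmm
            exact hi (Finset.mem_singleton.mp hmm)
          obtain ⟨i, hii, hMi⟩ := h1 j i0 hone
          exact hMi (hall i hii)
        have hs := hsplit j
        omega
      -- build left kernel vector
      have hsum : ∀ (j : Fin (n+1)) (b : Bool),
          ∑ i ∈ univ.filter (fun i => blk i = b), M i j = 1 := by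
        intro j b
        have hc := hboth j
        have hcb : (univ.filter (fun i => blk i = b ∧ M i j ≠ 0)).card = 1 := by
          cases b
          · exact hc.2
          · exact hc.1
        obtain ⟨i1, hi1⟩ := Finset.card_eq_one.mp hcb
        have he : (univ.filter (fun i => blk i = b)).filter (fun i => M i j ≠ 0)
            = univ.filter (fun i => blk i = b ∧ M i j ≠ 0) := Finset.filter_filter _ _ _
        rw [← Finset.sum_filter_ne_zero, he, hi1, Finset.sum_singleton]
        have hm : i1 ∈ univ.filter (fun i => blk i = b ∧ M i j ≠ 0) :=
          hi1 ▸ Finset.mem_singleton_self i1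
        simp only [Finset.mem_filter] at hm
        exact (h01 i1 j).resolve_left hm.2.2
      set v : Fin (n+1) → ℝ := fun i => if blk i = true then (1:ℝ) else -1 with hv
      have hvM : v ᵥ* M = 0 := by
        funext j
        show ∑ i, v i * M i j = 0
        rw [← Finset.sum_filter_add_sum_filter_not univ (fun i => blk i = true)
          (fun i => v i * M i j)]
        have e1 : ∑ i ∈ univ.filter (fun i => blk i = true), v i * M i j
            = ∑ i ∈ univ.filter (fun i => blk i = true), M i j := by
          refine Finset.sum_congr rfl fun i hi => ?_
          simp only [Finset.mem_filter] at hi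
          rw [hv]
          simp [hi.2]
        have e2 : ∑ i ∈ univ.filter (fun i => ¬blk i = true), v i * M i j
            = -∑ i ∈ univ.filter (fun i => blk i = false), M i j := by
          rw [← Finset.sum_neg_distrib]
          refine Finset.sum_congr ?_ fun i hi => ?_
          · ext i; simp [Bool.not_eq_true]
          · simp only [Finset.mem_filter] at hi
            rw [hv]
            simp [hi.2]
        rw [e1, e2, hsum j true, hsum j false]
        ring
      have hv0 : v ≠ 0 := by
        intro h
        have h0 := congrFun h 0
        rw [hv] at h0
        simp only [Pi.zero_apply] at h0
        split_ifs at h0 <;> norm_num at h0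
      left
      exact Matrix.exists_vecMul_eq_zero_iff.mp ⟨v, hv0, hvM⟩

private lemma sum_ind {N : ℕ} (a : ℕ) (ha : a < N) :
    ∑ i : Fin N, (if (i : ℕ) = a then (1:ℝ) else 0) = 1 := by
  rw [Finset.sum_eq_single ⟨a, ha⟩]
  · simp
  · intro i _ hi
    rw [if_neg]
    intro h
    exact hi (Fin.ext h)
  · simp

private lemma sum_ind' {N : ℕ} (a : ℕ) (ha : a < N) :
    ∑ i : Fin N, (if a = (i : ℕ) then (1:ℝ) else 0) = 1 := by
  refine (Finset.sum_congr rfl fun i _ => ?_).trans (sum_ind a ha)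
  exact if_congr eq_comm rfl rfl

private lemma detL (I J : ℕ) (hI : 1 ≤ I) (hJ : 1 ≤ J) :
    ((Matrix.of (fun v (c : Fin I × Fin J) => designCol I J c v)) *
      (Matrix.of (fun v (c : Fin I × Fin J) => designCol I J c v))ᵀ).det
      = (I:ℝ)^(J-1) * (J:ℝ)^(I-1) := by
  classical
  have hI0 : (I:ℝ) ≠ 0 := Nat.cast_ne_zero.mpr (by omega)
  have hJ0 : (J:ℝ) ≠ 0 := Nat.cast_ne_zero.mpr (by omega)
  set D : Matrix (Unit ⊕ Fin (I-1) ⊕ Fin (J-1)) (Fin I × Fin J) ℝ :=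
    Matrix.of (fun v c => designCol I J c v) with hD
  set A2 : Matrix (Fin (I-1)) (Fin (I-1)) ℝ :=
    Matrix.of (fun a a' => (if a = a' then (J:ℝ) else 0) - (J:ℝ)/(I:ℝ)) with hA2
  set A3 : Matrix (Fin (J-1)) (Fin (J-1)) ℝ :=
    Matrix.of (fun b b' => (if b = b' then (I:ℝ) else 0) - (I:ℝ)/(J:ℝ)) with hA3
  set E : Matrix (Unit ⊕ Fin (I-1) ⊕ Fin (J-1)) (Unit ⊕ Fin (I-1) ⊕ Fin (J-1)) ℝ :=
    Matrix.fromBlocks 1 0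
      (Matrix.of fun w _ => Sum.elim (fun _ => -(1:ℝ)/I) (fun _ => -(1:ℝ)/J) w) 1 with hE
  set R : Matrix (Unit ⊕ Fin (I-1) ⊕ Fin (J-1)) (Unit ⊕ Fin (I-1) ⊕ Fin (J-1)) ℝ :=
    Matrix.fromBlocks (Matrix.of fun _ _ => (I:ℝ)*(J:ℝ))
      (Matrix.of fun _ w => Sum.elim (fun _ => (J:ℝ)) (fun _ => (I:ℝ)) w) 0
      (Matrix.fromBlocks A2 0 0 A3) with hR
  -- entries of the Gram matrix
  have hgram : ∀ v w, (D * Dᵀ) v w = ∑ i : Fin I, ∑ j : Fin J,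
      designCol I J (i, j) v * designCol I J (i, j) w := by
    intro v w
    rw [Matrix.mul_apply, Fintype.sum_prod_type]
    rfl
  have hvalI : ∀ a : Fin (I-1), (a:ℕ) < I := fun a => lt_of_lt_of_le a.isLt (Nat.sub_le I 1)
  have hvalJ : ∀ b : Fin (J-1), (b:ℕ) < J := fun b => lt_of_lt_of_le b.isLt (Nat.sub_le J 1)
  have hLuu : (D * Dᵀ) (Sum.inl ()) (Sum.inl ()) = (I:ℝ)*(J:ℝ) := by
    rw [hgram]
    simp [designCol, Finset.sum_const, Finset.card_univ]
  have hLua : ∀ a : Fin (I-1), (D * Dᵀ) (Sum.inl ()) (Sum.inr (Sum.inl a)) = (J:ℝ) := by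
    intro a
    rw [hgram]
    have h1 : ∀ i : Fin I, ∑ j : Fin J, designCol I J (i,j) (Sum.inl ())
        * designCol I J (i,j) (Sum.inr (Sum.inl a))
        = (J:ℝ) * (if (i:ℕ) = (a:ℕ) then 1 else 0) := by
      intro i
      by_cases hia : (i:ℕ) = (a:ℕ) <;> simp [designCol, hia]
    rw [Finset.sum_congr rfl fun i _ => h1 i, ← Finset.mul_sum, sum_ind _ (hvalI a), mul_one]
  have hLub : ∀ b : Fin (J-1), (D * Dᵀ) (Sum.inl ()) (Sum.inr (Sum.inr b)) = (I:ℝ) := by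
    intro b
    rw [hgram, Finset.sum_comm]
    have h1 : ∀ j : Fin J, ∑ i : Fin I, designCol I J (i,j) (Sum.inl ())
        * designCol I J (i,j) (Sum.inr (Sum.inr b))
        = (I:ℝ) * (if (j:ℕ) = (b:ℕ) then 1 else 0) := by
      intro j
      by_cases hjb : (j:ℕ) = (b:ℕ) <;> simp [designCol, hjb]
    rw [Finset.sum_congr rfl fun j _ => h1 j, ← Finset.mul_sum, sum_ind _ (hvalJ b), mul_one]
  have hLsymm : ∀ v w, (D * Dᵀ) v w = (D * Dᵀ) w v := by
    intro v w
    rw [hgram, hgram]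
    exact Finset.sum_congr rfl fun i _ => Finset.sum_congr rfl fun j _ => mul_comm _ _
  have hLaa : ∀ a a' : Fin (I-1), (D * Dᵀ) (Sum.inr (Sum.inl a)) (Sum.inr (Sum.inl a'))
      = if a = a' then (J:ℝ) else 0 := by
    intro a a'
    rw [hgram]
    by_cases h : a = a'
    · subst h
      rw [if_pos rfl]
      have h1 : ∀ i : Fin I, ∑ j : Fin J, designCol I J (i,j) (Sum.inr (Sum.inl a))
          * designCol I J (i,j) (Sum.inr (Sum.inl a))
          = (J:ℝ) * (if (i:ℕ) = (a:ℕ) then 1 else 0) := by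
        intro i
        by_cases hia : (i:ℕ) = (a:ℕ) <;> simp [designCol, hia]
      rw [Finset.sum_congr rfl fun i _ => h1 i, ← Finset.mul_sum, sum_ind _ (hvalI a), mul_one]
    · rw [if_neg h]
      have hvv : (a:ℕ) ≠ (a':ℕ) := fun hv => h (Fin.ext hv)
      refine Finset.sum_eq_zero fun i _ => Finset.sum_eq_zero fun j _ => ?_
      simp only [designCol]
      rcases eq_or_ne ((i:ℕ)) ((a:ℕ)) with hia | hia
      · rw [if_neg (show ¬ (i:ℕ) = (a':ℕ) by rw [hia]; exact hvv), mul_zero]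
      · rw [if_neg hia, zero_mul]
  have hLbb : ∀ b b' : Fin (J-1), (D * Dᵀ) (Sum.inr (Sum.inr b)) (Sum.inr (Sum.inr b'))
      = if b = b' then (I:ℝ) else 0 := by
    intro b b'
    rw [hgram, Finset.sum_comm]
    by_cases h : b = b'
    · subst h
      rw [if_pos rfl]
      have h1 : ∀ j : Fin J, ∑ i : Fin I, designCol I J (i,j) (Sum.inr (Sum.inr b))
          * designCol I J (i,j) (Sum.inr (Sum.inr b))
          = (I:ℝ) * (if (j:ℕ) = (b:ℕ) then 1 else 0) := by
        intro j
        by_cases hjb : (j:ℕ) = (b:ℕ) <;> simp [designCol, hjb]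
      rw [Finset.sum_congr rfl fun j _ => h1 j, ← Finset.mul_sum, sum_ind _ (hvalJ b), mul_one]
    · rw [if_neg h]
      have hvv : (b:ℕ) ≠ (b':ℕ) := fun hv => h (Fin.ext hv)
      refine Finset.sum_eq_zero fun j _ => Finset.sum_eq_zero fun i _ => ?_
      simp only [designCol]
      rcases eq_or_ne ((j:ℕ)) ((b:ℕ)) with hjb | hjb
      · rw [if_neg (show ¬ (j:ℕ) = (b':ℕ) by rw [hjb]; exact hvv), mul_zero]
      · rw [if_neg hjb, zero_mul]
  have hLab : ∀ (a : Fin (I-1)) (b : Fin (J-1)),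
      (D * Dᵀ) (Sum.inr (Sum.inl a)) (Sum.inr (Sum.inr b)) = 1 := by
    intro a b
    rw [hgram]
    have h1 : ∀ i : Fin I, ∑ j : Fin J, designCol I J (i,j) (Sum.inr (Sum.inl a))
        * designCol I J (i,j) (Sum.inr (Sum.inr b))
        = (if (i:ℕ) = (a:ℕ) then (1:ℝ) else 0) := by
      intro i
      by_cases hia : (i:ℕ) = (a:ℕ) <;>
        simp [designCol, hia, sum_ind _ (hvalJ b)]
    rw [Finset.sum_congr rfl fun i _ => h1 i, sum_ind _ (hvalI a)]
  have hmul : ∀ v w, (E * (D * Dᵀ)) v w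
      = E v (Sum.inl ()) * (D * Dᵀ) (Sum.inl ()) w
        + ((∑ a : Fin (I-1), E v (Sum.inr (Sum.inl a)) * (D * Dᵀ) (Sum.inr (Sum.inl a)) w)
        + (∑ b : Fin (J-1), E v (Sum.inr (Sum.inr b)) * (D * Dᵀ) (Sum.inr (Sum.inr b)) w)) := by
    intro v w
    rw [Matrix.mul_apply, Fintype.sum_sum_type, Fintype.sum_sum_type, Fintype.sum_unique]
  have hLau : ∀ a : Fin (I-1), (D * Dᵀ) (Sum.inr (Sum.inl a)) (Sum.inl ()) = (J:ℝ) :=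
    fun a => (hLsymm _ _).trans (hLua a)
  have hLbu : ∀ b : Fin (J-1), (D * Dᵀ) (Sum.inr (Sum.inr b)) (Sum.inl ()) = (I:ℝ) :=
    fun b => (hLsymm _ _).trans (hLub b)
  have hLba : ∀ (b : Fin (J-1)) (a' : Fin (I-1)),
      (D * Dᵀ) (Sum.inr (Sum.inr b)) (Sum.inr (Sum.inl a')) = 1 :=
    fun b a' => (hLsymm _ _).trans (hLab a' b)
  have hEL : E * (D * Dᵀ) = R := by
    ext v w
    rcases v with _ | a | b <;> rcases w with _ | a' | b' <;>
      rw [hmul] <;>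
      simp only [hE, hR, hA2, hA3, Matrix.fromBlocks_apply₁₁, Matrix.fromBlocks_apply₁₂,
        Matrix.fromBlocks_apply₂₁, Matrix.fromBlocks_apply₂₂, Matrix.of_apply, Sum.elim_inl,
        Sum.elim_inr, Matrix.one_apply, Matrix.zero_apply, Sum.inl.injEq, Sum.inr.injEq,
        hLuu, hLua, hLub, hLaa, hLbb, hLab, hLau, hLbu, hLba, Sum.inr.injEq,
        reduceCtorEq, if_false, if_true, ite_mul, mul_ite, mul_zero, zero_mul, mul_one, one_mul,
        Finset.sum_ite_eq, Finset.sum_ite_eq', Finset.mem_univ, Finset.sum_const,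
        Finset.card_univ, Fintype.card_fin, nsmul_eq_mul, Finset.sum_const_zero, add_zero,
        zero_add] <;>
      (try split_ifs) <;> field_simp <;> ring
  have hdetE : E.det = 1 := by
    rw [hE, Matrix.det_fromBlocks_zero₁₂]
    simp
  have hdetEL : (D * Dᵀ).det = R.det := by
    rw [← hEL, Matrix.det_mul, hdetE, one_mul]
  have hA2eq : A2 = (J:ℝ) • (1 + Matrix.replicateCol Unit (fun _ => -(1:ℝ)/(I:ℝ))
      * Matrix.replicateRow Unit (fun _ => (1:ℝ))) := by
    ext a a'
    simp only [hA2, Matrix.of_apply, Matrix.smul_apply, Matrix.add_apply, Matrix.one_apply,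
      Matrix.mul_apply, Matrix.replicateCol_apply, Matrix.replicateRow_apply, Fintype.sum_unique, smul_eq_mul]
    split_ifs <;> ring
  have hA3eq : A3 = (I:ℝ) • (1 + Matrix.replicateCol Unit (fun _ => -(1:ℝ)/(J:ℝ))
      * Matrix.replicateRow Unit (fun _ => (1:ℝ))) := by
    ext b b'
    simp only [hA3, Matrix.of_apply, Matrix.smul_apply, Matrix.add_apply, Matrix.one_apply,
      Matrix.mul_apply, Matrix.replicateCol_apply, Matrix.replicateRow_apply, Fintype.sum_unique, smul_eq_mul]
    split_ifs <;> ring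
  have hdetA2 : A2.det = (J:ℝ)^(I-1) * (1 + ((I-1 : ℕ) : ℝ) * (-(1:ℝ)/(I:ℝ))) := by
    rw [hA2eq, Matrix.det_smul, Matrix.det_one_add_replicateCol_mul_replicateRow]
    simp [dotProduct, Finset.sum_const, Finset.card_univ, mul_comm]
  have hdetA3 : A3.det = (I:ℝ)^(J-1) * (1 + ((J-1 : ℕ) : ℝ) * (-(1:ℝ)/(J:ℝ))) := by
    rw [hA3eq, Matrix.det_smul, Matrix.det_one_add_replicateCol_mul_replicateRow]
    simp [dotProduct, Finset.sum_const, Finset.card_univ, mul_comm]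
  have hdetR : R.det = ((I:ℝ)*(J:ℝ)) * (A2.det * A3.det) := by
    rw [hR, Matrix.det_fromBlocks_zero₂₁, Matrix.det_fromBlocks_zero₂₁]
    congr 1
    simp [Matrix.det_unique]
  rw [hdetEL, hdetR, hdetA2, hdetA3, Nat.cast_sub hI, Nat.cast_sub hJ]
  push_cast
  field_simp
  ring

open Classical in
theorem stmt9 (I J : ℕ) (hI : 1 ≤ I) (hJ : 1 ≤ J) :
    (((Finset.univ : Finset (Fin I × Fin J)).powersetCard (I + J - 1)).filter
      (fun S => LinearIndependent ℝ (fun c : {x // x ∈ S} => designCol I J c.val))).card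
      = I ^ (J - 1) * J ^ (I - 1) := by
  classical
  set V := (Unit ⊕ Fin (I - 1) ⊕ Fin (J - 1)) with hV
  set κ := (Fin I × Fin J) with hκ
  have hcard : Fintype.card V = I + J - 1 := by
    simp only [hV, Fintype.card_sum, Fintype.card_unit, Fintype.card_fin]
    omega
  set D : Matrix V κ ℝ := Matrix.of (fun v c => designCol I J c v) with hD
  -- the choice function
  set f : Finset κ → V → κ := fun S v =>
    if h : S.card = Fintype.card V then
      ((S.equivFinOfCardEq h).symm (Fintype.equivFin V v)).val
    else (⟨0, hI⟩, ⟨0, hJ⟩) with hf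
  have hfS : ∀ (S : Finset κ) (h : S.card = Fintype.card V) (v : V),
      f S v = ((S.equivFinOfCardEq h).symm (Fintype.equivFin V v)).val := by
    intro S h v
    rw [hf]
    simp [h]
  have hinj : ∀ S : Finset κ, S.card = Fintype.card V → Function.Injective (f S) := by
    intro S h a b hab
    rw [hfS S h, hfS S h] at hab
    exact (Fintype.equivFin V).injective
      ((S.equivFinOfCardEq h).symm.injective (Subtype.val_injective hab))
  have hmem : ∀ S : Finset κ, S.card = Fintype.card V → ∀ v, f S v ∈ S := by
    intro S h v
    rw [hfS S h]
    exact ((S.equivFinOfCardEq h).symm _).property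
  set P := (Finset.univ : Finset κ).powersetCard (I + J - 1) with hP
  set dS : Finset κ → ℝ := fun S => (D.submatrix id (f S)).det with hdS
  -- Part B : unimodularity
  have hTU : ∀ S ∈ P, dS S = 0 ∨ dS S = 1 ∨ dS S = -1 := by
    intro S hSP
    rw [hP, Finset.mem_powersetCard_univ] at hSP
    have hS' : S.card = Fintype.card V := by rw [hSP, hcard]
    set MS : Matrix V V ℝ := D.submatrix id (f S) with hMS
    have hMSentry : ∀ v w, MS v w = designCol I J (f S w) v := fun v w => rfl
    set rowIdx : Finset V := Finset.univ.image (fun a : Fin (I-1) => Sum.inr (Sum.inl a)) with hri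
    have hjnot : (Sum.inl () : V) ∉ rowIdx := by simp [hri]
    set M1 : Matrix V V ℝ := MS.updateRow (Sum.inl ())
      ((1:ℝ) • MS (Sum.inl ()) + ∑ k ∈ rowIdx, (-1:ℝ) • MS k) with hM1
    have hdet1 : M1.det = MS.det := by
      rw [hM1, Matrix.det_updateRow_sum_aux MS rowIdx hjnot (fun _ => (-1:ℝ)) 1]
      simp
    have hM1row : ∀ w, M1 (Sum.inl ()) w
        = (if ((f S w).1 : ℕ) = I - 1 then (1:ℝ) else 0) := by
      intro w
      rw [hM1, Matrix.updateRow_self]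
      simp only [Pi.add_apply, Pi.smul_apply, smul_eq_mul, one_mul, Finset.sum_apply]
      rw [hri, Finset.sum_image (by
        intro x _ y _ hxy
        exact Sum.inl_injective (Sum.inr_injective hxy))]
      have h2 : ∀ a : Fin (I-1), (-1:ℝ) * MS (Sum.inr (Sum.inl a)) w
          = -(if ((f S w).1 : ℕ) = (a:ℕ) then (1:ℝ) else 0) := by
        intro a
        rw [hMSentry]
        simp only [designCol]
        split_ifs <;> ring
      rw [Finset.sum_congr rfl fun a _ => h2 a, hMSentry]
      simp only [designCol]
      rcases Nat.lt_or_ge ((f S w).1 : ℕ) (I-1) with hlt | hge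
      · have hne : ¬ ((f S w).1 : ℕ) = I - 1 := by omega
        rw [if_neg hne, Finset.sum_neg_distrib, sum_ind' _ hlt]
        ring
      · have heq : ((f S w).1 : ℕ) = I - 1 := by
          have := ((f S w).1).isLt
          omega
        rw [if_pos heq]
        have hz : ∀ a : Fin (I-1), -(if ((f S w).1 : ℕ) = (a:ℕ) then (1:ℝ) else 0) = 0 := by
          intro a
          rw [if_neg (by have := a.isLt; omega), neg_zero]
        rw [Finset.sum_congr rfl fun a _ => hz a, Finset.sum_const_zero]
        ring
    have hM1rest : ∀ (x : Fin (I-1) ⊕ Fin (J-1)) w, M1 (Sum.inr x) w = MS (Sum.inr x) w := by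
      intro x w
      rw [hM1, Matrix.updateRow_ne Sum.inr_ne_inl]
    set blk : V → Bool :=
      Sum.elim (fun _ => true) (Sum.elim (fun _ => true) (fun _ => false)) with hblk
    have h01V : ∀ v w, M1 v w = 0 ∨ M1 v w = 1 := by
      intro v w
      rcases v with _ | a | c
      · rw [hM1row]
        split_ifs
        · right; rfl
        · left; rfl
      · rw [hM1rest, hMSentry]
        simp only [designCol]
        split_ifs
        · right; rfl
        · left; rfl
      · rw [hM1rest, hMSentry]
        simp only [designCol]
        split_ifs
        · right; rfl
        · left; rfl
    have hcol1 : ∀ (w : V) (b : Bool),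
        ((Finset.univ.filter (fun v => blk v = b ∧ M1 v w ≠ 0)).card ≤ 1) := by
      intro w b
      refine Finset.card_le_one.mpr ?_
      intro v hv v' hv'
      simp only [Finset.mem_filter, Finset.mem_univ, true_and] at hv hv'
      obtain ⟨hbv, hMv⟩ := hv
      obtain ⟨hbv', hMv'⟩ := hv'
      have hnz_u : M1 (Sum.inl ()) w ≠ 0 → ((f S w).1 : ℕ) = I - 1 := by
        rw [hM1row w]
        intro h
        by_contra h'
        rw [if_neg h'] at h
        exact h rfl
      have hnz_a : ∀ a : Fin (I-1), M1 (Sum.inr (Sum.inl a)) w ≠ 0 → ((f S w).1 : ℕ) = (a:ℕ) := by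
        intro a
        rw [hM1rest, hMSentry]
        simp only [designCol]
        intro h
        by_contra h'
        rw [if_neg h'] at h
        exact h rfl
      have hnz_c : ∀ c : Fin (J-1), M1 (Sum.inr (Sum.inr c)) w ≠ 0 → ((f S w).2 : ℕ) = (c:ℕ) := by
        intro c
        rw [hM1rest, hMSentry]
        simp only [designCol]
        intro h
        by_contra h'
        rw [if_neg h'] at h
        exact h rfl
      rcases v with _ | a | c <;> rcases v' with _ | a' | c' <;>
        simp only [hblk, Sum.elim_inl, Sum.elim_inr] at hbv hbv'
      · rfl
      · exfalso
        have h1 := hnz_u hMv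
        have h2 := hnz_a a' hMv'
        have := a'.isLt
        omega
      · exact absurd (hbv.trans hbv'.symm) (by decide)
      · exfalso
        have h1 := hnz_u hMv'
        have h2 := hnz_a a hMv
        have := a.isLt
        omega
      · have h1 := hnz_a a hMv
        have h2 := hnz_a a' hMv'
        have : a = a' := Fin.ext (by omega)
        rw [this]
      · exact absurd (hbv.trans hbv'.symm) (by decide)
      · exact absurd (hbv.trans hbv'.symm) (by decide)
      · exact absurd (hbv.trans hbv'.symm) (by decide)
      · have h1 := hnz_c c hMv
        have h2 := hnz_c c' hMv'
        have : c = c' := Fin.ext (by omega)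
        rw [this]
    set e : V ≃ Fin (Fintype.card V) := Fintype.equivFin V with he
    set M2 : Matrix (Fin (Fintype.card V)) (Fin (Fintype.card V)) ℝ :=
      M1.submatrix e.symm e.symm with hM2
    have hdet2 : M2.det = M1.det := Matrix.det_submatrix_equiv_self e.symm M1
    have hcol2 : ∀ (j : Fin (Fintype.card V)) (b : Bool),
        ((Finset.univ.filter (fun i => blk (e.symm i) = b ∧ M2 i j ≠ 0)).card ≤ 1) := by
      intro j b
      refine Finset.card_le_one.mpr ?_
      intro i1 h1 i2 h2
      simp only [Finset.mem_filter, Finset.mem_univ, true_and] at h1 h2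
      have hkey := Finset.card_le_one.mp (hcol1 (e.symm j) b) (e.symm i1)
        (by simp only [Finset.mem_filter, Finset.mem_univ, true_and]; exact h1) (e.symm i2)
        (by simp only [Finset.mem_filter, Finset.mem_univ, true_and]; exact h2)
      exact e.symm.injective hkey
    have htu := tu_det (Fintype.card V) M2 (fun i => blk (e.symm i))
      (fun i j => h01V _ _) hcol2
    have hd : dS S = M2.det := by rw [hdet2, hdet1]
    rw [hd]
    exact htu
  -- Part C : linear independence iff nonzero det
  have hLI : ∀ S ∈ P,
      (LinearIndependent ℝ (fun c : {x // x ∈ S} => designCol I J c.val)) ↔ dS S ≠ 0 := by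
    intro S hS
    rw [hP, Finset.mem_powersetCard_univ] at hS
    have hS' : S.card = Fintype.card V := by rw [hS, hcard]
    set e : V ≃ {x // x ∈ S} :=
      (Fintype.equivFin V).trans (S.equivFinOfCardEq hS').symm with he
    have he' : ∀ v, (e v).val = f S v := by
      intro v
      rw [hfS S hS']
      rfl
    rw [← linearIndependent_equiv e]
    have hfam : (fun c : {x // x ∈ S} => designCol I J c.val) ∘ e
        = fun v => ((D.submatrix id (f S))ᵀ) v := by
      funext v w
      simp only [Function.comp_apply, Matrix.transpose_apply, Matrix.submatrix_apply, id_eq]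
      rw [← he' v]
      rfl
    rw [hfam]; change LinearIndependent ℝ (Matrix.row ((D.submatrix id (f S))ᵀ)) ↔ _
    rw [Matrix.linearIndependent_rows_iff_isUnit, Matrix.isUnit_iff_isUnit_det,
      Matrix.det_transpose, isUnit_iff_ne_zero]
  -- Part A : determinant of the Gram matrix
  have hdetL : (D * Dᵀ).det = (I:ℝ)^(J-1) * (J:ℝ)^(I-1) := detL I J hI hJ
  -- Assembly
  have cb := cauchy_binet D Dᵀ f hinj hmem
  rw [hcard] at cb
  have htrans : ∀ S : Finset κ, (Dᵀ.submatrix (f S) id).det = dS S := by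
    intro S
    rw [hdS]
    rw [show Dᵀ.submatrix (f S) id = (D.submatrix id (f S))ᵀ from rfl, Matrix.det_transpose]
  have hsum : ((P.filter
      (fun S => LinearIndependent ℝ (fun c : {x // x ∈ S} => designCol I J c.val))).card : ℝ)
      = ∑ S ∈ P, dS S * dS S := by
    rw [Finset.card_filter]
    push_cast
    refine Finset.sum_congr rfl fun S hS => ?_
    by_cases h : LinearIndependent ℝ (fun c : {x // x ∈ S} => designCol I J c.val)
    · rw [if_pos h]
      have hne := (hLI S hS).mp h
      rcases hTU S hS with h0 | h0 | h0
      · exact absurd h0 hne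
      · rw [h0]; norm_num
      · rw [h0]; norm_num
    · rw [if_neg h]
      have h0 : dS S = 0 := by
        by_contra h0
        exact h ((hLI S hS).mpr h0)
      rw [h0, mul_zero]
  have hfinal : ((P.filter
      (fun S => LinearIndependent ℝ (fun c : {x // x ∈ S} => designCol I J c.val))).card : ℝ)
      = ((I ^ (J - 1) * J ^ (I - 1) : ℕ) : ℝ) := by
    rw [hsum]
    have : ∑ S ∈ P, dS S * dS S = (D * Dᵀ).det := by
      rw [cb]
      refine Finset.sum_congr rfl fun S _ => ?_
      rw [htrans S, hdS]
    rw [this, hdetL]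
    push_cast
    ring
  exact_mod_cast hfinal
end
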